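/- arXiv:1002.1335 — 9 statements merged into one kernel-verified Lean document; each statement's English description precedes it below -/
import Mathlib

section
/- For every node i ∈ V, the expected influence of the singleton initial set {i} satisfies the recursion σ^(V,{i}) = 1 + ∑_{j ∈ V \ {i}} w(i,j) · σ^(V \ {i}, {j}). -/
open Finset

noncomputable def cPath {V : Type*} [Fintype V] [DecidableEq V]
    (w : V → V → ℝ) (W D : Finset V) (j : V) : ℝ := by
  classical
  exact ∑' k : ℕ, ∑ x : Fin (k + 1) → V,
    if x 0 = j ∧ Function.Injective x ∧
        (∀ m : Fin (k + 1), (m : ℕ) < k → x m ∈ W \ D) ∧ x (Fin.last k) ∈ D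
    then ∏ i : Fin k, w (x i.succ) (x i.castSucc) else 0

noncomputable def cPathVia {V : Type*} [Fintype V] [DecidableEq V]
    (w : V → V → ℝ) (W D : Finset V) (j v : V) : ℝ := by
  classical
  exact ∑' k : ℕ, ∑ x : Fin (k + 1) → V,
    if x 0 = j ∧ Function.Injective x ∧
        (∀ m : Fin (k + 1), (m : ℕ) < k → x m ∈ W \ D) ∧ x (Fin.last k) ∈ D ∧
        (∃ u : Fin (k + 1), (u : ℕ) < k ∧ x u = v)
    then ∏ i : Fin k, w (x i.succ) (x i.castSucc) else 0

noncomputable def sigmaInfl {V : Type*} [Fintype V] [DecidableEq V]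
    (w : V → V → ℝ) (W A : Finset V) : ℝ :=
  ∑ j ∈ W, cPath w W A j

def pjv {V : Type*} (w : V → V → ℝ) (j v : V) : List V → ℝ
  | [] => w v j
  | l :: ls => w l j * pjv w l v ls

noncomputable def fPoly {ι : Type*} [DecidableEq ι] (m : ℕ) (T : Finset ι) (x : ι → ℝ) : ℝ :=
  (Nat.factorial m : ℝ) * ∑ S ∈ T.powersetCard m, ∏ s ∈ S, x s

section Aux

lemma snoc_inj_iff {V : Type*} {n : ℕ} (y : Fin (n+1) → V) (v : V) :
    Function.Injective (Fin.snoc y v : Fin (n+2) → V) ↔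
      Function.Injective y ∧ ∀ m, y m ≠ v := by
  constructor
  · intro h
    refine ⟨fun a b hab => ?_, fun m hm => ?_⟩
    · have : (Fin.snoc y v : Fin (n+2) → V) a.castSucc
          = (Fin.snoc y v : Fin (n+2) → V) b.castSucc := by
        rw [Fin.snoc_castSucc, Fin.snoc_castSucc]; exact hab
      exact Fin.castSucc_injective _ (h this)
    · have h2 : (Fin.snoc y v : Fin (n+2) → V) m.castSucc
          = (Fin.snoc y v : Fin (n+2) → V) (Fin.last (n+1)) := by
        rw [Fin.snoc_castSucc, Fin.snoc_last]; exact hm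
      exact absurd (h h2) (Fin.ne_last_of_lt (Fin.castSucc_lt_last m))
  · rintro ⟨h1, h2⟩ a b hab
    rcases Fin.eq_castSucc_or_eq_last a with ⟨a', rfl⟩ | rfl <;>
      rcases Fin.eq_castSucc_or_eq_last b with ⟨b', rfl⟩ | rfl
    · simp only [Fin.snoc_castSucc] at hab
      exact congrArg Fin.castSucc (h1 hab)
    · simp only [Fin.snoc_castSucc, Fin.snoc_last] at hab
      exact absurd hab (h2 a')
    · simp only [Fin.snoc_castSucc, Fin.snoc_last] at hab
      exact absurd hab.symm (h2 b')
    · rfl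

lemma cPath_eq_sum {V : Type*} [Fintype V] [DecidableEq V] (w : V → V → ℝ)
    (W D : Finset V) (j : V) {M : ℕ} (hM : Fintype.card V ≤ M) :
    cPath w W D j = ∑ k ∈ Finset.range M, ∑ x : Fin (k + 1) → V,
      if x 0 = j ∧ Function.Injective x ∧
          (∀ m : Fin (k + 1), (m : ℕ) < k → x m ∈ W \ D) ∧ x (Fin.last k) ∈ D
      then ∏ i : Fin k, w (x i.succ) (x i.castSucc) else 0 := by
  classical
  unfold cPath
  rw [tsum_eq_sum (s := Finset.range M) ?hz]
  intro k hk
  apply Finset.sum_eq_zero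
  intro x _
  rw [if_neg]
  rintro ⟨-, hinj, -⟩
  have := Fintype.card_le_of_injective x hinj
  simp only [Fintype.card_fin] at this
  simp only [Finset.mem_range, not_lt] at hk
  omega

lemma sum_start {V : Type*} [Fintype V] [DecidableEq V] {α : Type*} [Fintype α] [DecidableEq α]
    (S : Finset V) (P : (α → V) → Prop) [DecidablePred P] (t : (α → V) → ℝ) (a : α) :
    ∑ j ∈ S, ∑ x : α → V, (if x a = j ∧ P x then t x else 0)
      = ∑ x : α → V, if x a ∈ S ∧ P x then t x else 0 := by
  rw [Finset.sum_comm]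
  apply Finset.sum_congr rfl
  intro x _
  simp only [ite_and]
  rw [Finset.sum_ite_eq]

def snocE (V : Type*) (n : ℕ) : ((Fin (n+1) → V) × V) ≃ (Fin (n+2) → V) where
  toFun p := Fin.snoc p.1 p.2
  invFun x := (fun m => x m.castSucc, x (Fin.last _))
  left_inv p := by
    refine Prod.ext ?_ ?_
    · funext m; simp
    · simp
  right_inv x := by
    funext m
    rcases Fin.eq_castSucc_or_eq_last m with ⟨m', rfl⟩ | rfl <;> simp

@[simp] lemma snocE_apply {V : Type*} {n : ℕ} (p : (Fin (n+1) → V) × V) :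
    snocE V n p = Fin.snoc p.1 p.2 := rfl

lemma step {V : Type*} [Fintype V] [DecidableEq V] (w : V → V → ℝ) (i : V) (k : ℕ) :
    (∑ x : Fin (k + 2) → V,
      if x 0 ∈ (Finset.univ : Finset V) ∧ Function.Injective x ∧
          (∀ m : Fin (k + 2), (m : ℕ) < k + 1 → x m ∈ Finset.univ \ {i}) ∧
          x (Fin.last (k + 1)) ∈ ({i} : Finset V)
      then ∏ t : Fin (k + 1), w (x t.succ) (x t.castSucc) else 0)
    = ∑ j ∈ Finset.univ.erase i, w i j *
        ∑ y : Fin (k + 1) → V,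
          if y 0 ∈ Finset.univ.erase i ∧ Function.Injective y ∧
              (∀ m : Fin (k + 1), (m : ℕ) < k → y m ∈ Finset.univ.erase i \ {j}) ∧
              y (Fin.last k) ∈ ({j} : Finset V)
          then ∏ t : Fin k, w (y t.succ) (y t.castSucc) else 0 := by
  classical
  have key : ∀ y : Fin (k + 1) → V,
      (∏ s : Fin (k + 1), w ((Fin.snoc y i : Fin (k+2) → V) s.succ)
          ((Fin.snoc y i : Fin (k+2) → V) s.castSucc))
        = (∏ s : Fin k, w (y s.succ) (y s.castSucc)) * w i (y (Fin.last k)) := by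
    intro y
    rw [Fin.prod_univ_castSucc]
    congr 1
    · apply Finset.prod_congr rfl
      intro s _
      rw [Fin.succ_castSucc, Fin.snoc_castSucc, Fin.snoc_castSucc]
    · rw [Fin.succ_last, Fin.snoc_last, Fin.snoc_castSucc]
  trans ∑ y : Fin (k + 1) → V,
      if Function.Injective y ∧ ∀ m, y m ≠ i
      then (∏ s : Fin k, w (y s.succ) (y s.castSucc)) * w i (y (Fin.last k)) else 0
  · rw [← (snocE V k).sum_comp, Fintype.sum_prod_type]
    apply Finset.sum_congr rfl
    intro y _
    simp only [snocE_apply]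
    trans ∑ v : V, if v = i then
        (if Function.Injective y ∧ ∀ m, y m ≠ i
         then (∏ s : Fin k, w (y s.succ) (y s.castSucc)) * w i (y (Fin.last k)) else 0) else 0
    · apply Finset.sum_congr rfl
      intro v _
      by_cases hv : v = i
      · subst hv
        rw [if_pos rfl, key y]
        refine if_congr ?_ rfl rfl
        simp only [Finset.mem_univ, true_and, Finset.mem_sdiff, Finset.mem_singleton,
          Fin.snoc_last, and_true]
        rw [snoc_inj_iff]
        constructor
        · rintro ⟨⟨h1, h2⟩, -⟩; exact ⟨h1, h2⟩
        · rintro ⟨h1, h2⟩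
          refine ⟨⟨h1, h2⟩, fun m hm => ?_⟩
          rcases Fin.eq_castSucc_or_eq_last m with ⟨m', rfl⟩ | rfl
          · rw [Fin.snoc_castSucc]; exact h2 m'
          · simp [Fin.val_last] at hm
      · rw [if_neg hv]
        apply if_neg
        rintro ⟨-, -, -, hl⟩
        rw [Fin.snoc_last, Finset.mem_singleton] at hl
        exact hv hl
    · rw [Finset.sum_ite_eq' Finset.univ i, if_pos (Finset.mem_univ i)]
  · symm
    simp only [Finset.mul_sum]
    rw [Finset.sum_comm]
    apply Finset.sum_congr rfl
    intro y _
    trans ∑ j ∈ Finset.univ.erase i, if y (Fin.last k) = j then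
        (if Function.Injective y ∧ ∀ m, y m ≠ i
         then w i (y (Fin.last k)) * ∏ s : Fin k, w (y s.succ) (y s.castSucc) else 0) else 0
    · apply Finset.sum_congr rfl
      intro j hj
      have hji : j ≠ i := (Finset.mem_erase.mp hj).1
      by_cases hlj : y (Fin.last k) = j
      · rw [if_pos hlj]
        subst hlj
        rw [mul_ite, mul_zero]
        refine if_congr ?_ rfl rfl
        simp only [Finset.mem_erase, Finset.mem_univ, and_true, Finset.mem_sdiff,
          Finset.mem_singleton]
        constructor
        · rintro ⟨h0, h1, h2⟩
          refine ⟨h1, fun m => ?_⟩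
          by_cases hm : (m : ℕ) < k
          · exact (h2 m hm).1
          · have : m = Fin.last k := by
              apply Fin.ext
              have := m.isLt
              simp only [Fin.val_last]
              omega
            rw [this]; exact hji
        · rintro ⟨h1, h2⟩
          refine ⟨h2 0, h1, fun m hm => ⟨h2 m, fun hcon => ?_⟩⟩
          have := h1 hcon
          rw [this] at hm
          simp [Fin.val_last] at hm
      · rw [if_neg hlj]
        rw [if_neg (by rintro ⟨-, -, -, hl⟩; exact hlj (Finset.mem_singleton.mp hl)), mul_zero]
    · rw [Finset.sum_ite_eq]
      by_cases hC : Function.Injective y ∧ ∀ m, y m ≠ i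
      · have hmem : y (Fin.last k) ∈ Finset.univ.erase i :=
          Finset.mem_erase.mpr ⟨hC.2 _, Finset.mem_univ _⟩
        rw [if_pos hmem, if_pos hC, if_pos hC, mul_comm]
      · rw [if_neg hC, if_neg hC, ite_self]

end Aux

theorem stmt0 {V : Type*} [Fintype V] [DecidableEq V] (w : V → V → ℝ)
    (hw0 : ∀ i j : V, 0 ≤ w i j)
    (hw1 : ∀ j : V, ∑ i ∈ Finset.univ.erase j, w i j ≤ 1)
    (i : V) :
    sigmaInfl w Finset.univ {i}
      = 1 + ∑ j ∈ Finset.univ.erase i, w i j * sigmaInfl w (Finset.univ.erase i) {j} := by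
  classical
  have hA0 : (∑ x : Fin (0 + 1) → V,
      if x 0 ∈ (Finset.univ : Finset V) ∧ Function.Injective x ∧
          (∀ m : Fin (0 + 1), (m : ℕ) < 0 → x m ∈ Finset.univ \ {i}) ∧
          x (Fin.last 0) ∈ ({i} : Finset V)
      then ∏ s : Fin 0, w (x s.succ) (x s.castSucc) else 0) = 1 := by
    trans ∑ x : Fin (0 + 1) → V, if x 0 = i then (1 : ℝ) else 0
    · apply Finset.sum_congr rfl
      intro x _
      have hinj : Function.Injective x := fun a b _ => Fin.ext (by omega)
      refine Eq.trans (if_congr ?_ (by simp) rfl) rfl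
      simp [hinj, Fin.last]
    · rw [Finset.sum_eq_single_of_mem (fun _ : Fin (0 + 1) => i) (Finset.mem_univ _) ?h0,
        if_pos rfl]
      intro b _ hb
      rw [if_neg]
      intro h
      apply hb
      funext m
      have hm0 : m = 0 := Fin.ext (by omega)
      rw [hm0, h]
  have hinner : ∀ j : V, ∑ s ∈ Finset.univ.erase i, cPath w (Finset.univ.erase i) {j} s
      = ∑ k ∈ Finset.range (Fintype.card V), ∑ y : Fin (k + 1) → V,
          if y 0 ∈ Finset.univ.erase i ∧ Function.Injective y ∧
              (∀ m : Fin (k + 1), (m : ℕ) < k → y m ∈ Finset.univ.erase i \ {j}) ∧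
              y (Fin.last k) ∈ ({j} : Finset V)
          then ∏ s : Fin k, w (y s.succ) (y s.castSucc) else 0 := by
    intro j
    calc ∑ s ∈ Finset.univ.erase i, cPath w (Finset.univ.erase i) {j} s
        = ∑ s ∈ Finset.univ.erase i, ∑ k ∈ Finset.range (Fintype.card V),
            ∑ y : Fin (k + 1) → V,
              if y 0 = s ∧ Function.Injective y ∧
                  (∀ m : Fin (k + 1), (m : ℕ) < k → y m ∈ Finset.univ.erase i \ {j}) ∧
                  y (Fin.last k) ∈ ({j} : Finset V)
              then ∏ s : Fin k, w (y s.succ) (y s.castSucc) else 0 :=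
          Finset.sum_congr rfl fun s _ => cPath_eq_sum w _ _ s le_rfl
      _ = ∑ k ∈ Finset.range (Fintype.card V), ∑ s ∈ Finset.univ.erase i,
            ∑ y : Fin (k + 1) → V,
              if y 0 = s ∧ Function.Injective y ∧
                  (∀ m : Fin (k + 1), (m : ℕ) < k → y m ∈ Finset.univ.erase i \ {j}) ∧
                  y (Fin.last k) ∈ ({j} : Finset V)
              then ∏ s : Fin k, w (y s.succ) (y s.castSucc) else 0 := Finset.sum_comm
      _ = _ := Finset.sum_congr rfl fun k _ => sum_start _ _ _ 0
  have hRHS : ∑ j ∈ Finset.univ.erase i, w i j * sigmaInfl w (Finset.univ.erase i) {j}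
      = ∑ k ∈ Finset.range (Fintype.card V), ∑ j ∈ Finset.univ.erase i, w i j *
          ∑ y : Fin (k + 1) → V,
            if y 0 ∈ Finset.univ.erase i ∧ Function.Injective y ∧
                (∀ m : Fin (k + 1), (m : ℕ) < k → y m ∈ Finset.univ.erase i \ {j}) ∧
                y (Fin.last k) ∈ ({j} : Finset V)
            then ∏ s : Fin k, w (y s.succ) (y s.castSucc) else 0 := by
    unfold sigmaInfl
    rw [← Finset.sum_comm]
    apply Finset.sum_congr rfl
    intro j _
    rw [hinner j, Finset.mul_sum]
  unfold sigmaInfl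
  calc ∑ j ∈ (Finset.univ : Finset V), cPath w Finset.univ {i} j
      = ∑ j ∈ (Finset.univ : Finset V), ∑ k ∈ Finset.range (Fintype.card V + 1),
          ∑ x : Fin (k + 1) → V,
            if x 0 = j ∧ Function.Injective x ∧
                (∀ m : Fin (k + 1), (m : ℕ) < k → x m ∈ Finset.univ \ {i}) ∧
                x (Fin.last k) ∈ ({i} : Finset V)
            then ∏ s : Fin k, w (x s.succ) (x s.castSucc) else 0 :=
        Finset.sum_congr rfl fun j _ => cPath_eq_sum w _ _ j (Nat.le_succ _)
    _ = ∑ k ∈ Finset.range (Fintype.card V + 1), ∑ j ∈ (Finset.univ : Finset V),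
          ∑ x : Fin (k + 1) → V,
            if x 0 = j ∧ Function.Injective x ∧
                (∀ m : Fin (k + 1), (m : ℕ) < k → x m ∈ Finset.univ \ {i}) ∧
                x (Fin.last k) ∈ ({i} : Finset V)
            then ∏ s : Fin k, w (x s.succ) (x s.castSucc) else 0 := Finset.sum_comm
    _ = ∑ k ∈ Finset.range (Fintype.card V + 1),
          ∑ x : Fin (k + 1) → V,
            if x 0 ∈ (Finset.univ : Finset V) ∧ Function.Injective x ∧
                (∀ m : Fin (k + 1), (m : ℕ) < k → x m ∈ Finset.univ \ {i}) ∧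
                x (Fin.last k) ∈ ({i} : Finset V)
            then ∏ s : Fin k, w (x s.succ) (x s.castSucc) else 0 :=
        Finset.sum_congr rfl fun k _ => sum_start _ _ _ 0
    _ = (∑ k ∈ Finset.range (Fintype.card V),
          ∑ x : Fin (k + 1 + 1) → V,
            if x 0 ∈ (Finset.univ : Finset V) ∧ Function.Injective x ∧
                (∀ m : Fin (k + 1 + 1), (m : ℕ) < k + 1 → x m ∈ Finset.univ \ {i}) ∧
                x (Fin.last (k + 1)) ∈ ({i} : Finset V)
            then ∏ s : Fin (k + 1), w (x s.succ) (x s.castSucc) else 0)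
        + (∑ x : Fin (0 + 1) → V,
            if x 0 ∈ (Finset.univ : Finset V) ∧ Function.Injective x ∧
                (∀ m : Fin (0 + 1), (m : ℕ) < 0 → x m ∈ Finset.univ \ {i}) ∧
                x (Fin.last 0) ∈ ({i} : Finset V)
            then ∏ s : Fin 0, w (x s.succ) (x s.castSucc) else 0) :=
        Finset.sum_range_succ' _ _
    _ = 1 + ∑ j ∈ Finset.univ.erase i, w i j * sigmaInfl w (Finset.univ.erase i) {j} := by
        rw [hA0, hRHS, add_comm]
        congr 1
        exact Finset.sum_congr rfl fun k _ => step w i k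
end

section
/- For every nonempty initial set A ⊆ V, writing N_i := (V \ A) ∪ {i} for each i ∈ A, the expected influence decomposes as σ^(V,A) = ∑_{i ∈ A} σ^(N_i, {i}). -/
open Finset

open scoped Classical in
private lemma inner_summable {V : Type*} [Fintype V] [DecidableEq V]
    (w : V → V → ℝ) (W D : Finset V) (j : V) :
    Summable (fun k : ℕ => ∑ x : Fin (k + 1) → V,
      if x 0 = j ∧ Function.Injective x ∧
          (∀ m : Fin (k + 1), (m : ℕ) < k → x m ∈ W \ D) ∧ x (Fin.last k) ∈ D
      then ∏ i : Fin k, w (x i.succ) (x i.castSucc) else 0) := by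
  apply summable_of_ne_finset_zero (s := Finset.range (Fintype.card V))
  intro k hk
  simp only [Finset.mem_range, not_lt] at hk
  apply Finset.sum_eq_zero
  intro x _
  rw [if_neg]
  rintro ⟨-, hinj, -, -⟩
  have := Fintype.card_le_of_injective x hinj
  simp only [Fintype.card_fin] at this
  omega

private lemma cPath_eq_zero {V : Type*} [Fintype V] [DecidableEq V]
    (w : V → V → ℝ) (W D : Finset V) (j : V) (hD : D ⊆ W) (hj : j ∉ W) :
    cPath w W D j = 0 := by
  classical
  unfold cPath
  have : ∀ k : ℕ, (∑ x : Fin (k + 1) → V,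
      if x 0 = j ∧ Function.Injective x ∧
          (∀ m : Fin (k + 1), (m : ℕ) < k → x m ∈ W \ D) ∧ x (Fin.last k) ∈ D
      then ∏ i : Fin k, w (x i.succ) (x i.castSucc) else 0) = 0 := by
    intro k
    apply Finset.sum_eq_zero
    intro x _
    rw [if_neg]
    rintro ⟨h0, hinj, hmem, hlast⟩
    rcases Nat.eq_zero_or_pos k with hk | hk
    · subst hk
      have : x (Fin.last 0) = j := by
        have : Fin.last 0 = 0 := rfl
        rw [this, h0]
      rw [this] at hlast
      exact hj (hD hlast)
    · have h := hmem 0 (by simpa using hk)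
      rw [h0] at h
      exact hj (Finset.mem_sdiff.mp h).1
  simp only [this, tsum_zero]

private lemma key_decomp {V : Type*} [Fintype V] [DecidableEq V] (w : V → V → ℝ)
    (A : Finset V) (j : V) :
    ∑ i ∈ A, cPath w ((Finset.univ \ A) ∪ {i}) {i} j = cPath w Finset.univ A j := by
  classical
  unfold cPath
  rw [← Summable.tsum_finsetSum (fun i _ => inner_summable w _ _ j)]
  apply tsum_congr
  intro k
  rw [Finset.sum_comm]
  apply Finset.sum_congr rfl
  intro x _
  have hstep : ∀ i ∈ A,
      (if x 0 = j ∧ Function.Injective x ∧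
          (∀ m : Fin (k + 1), (m : ℕ) < k → x m ∈ ((Finset.univ \ A) ∪ {i}) \ {i}) ∧
          x (Fin.last k) ∈ ({i} : Finset V)
        then ∏ i : Fin k, w (x i.succ) (x i.castSucc) else 0)
      = (if (x 0 = j ∧ Function.Injective x ∧
          (∀ m : Fin (k + 1), (m : ℕ) < k → x m ∈ Finset.univ \ A)) ∧
          x (Fin.last k) = i
        then ∏ i : Fin k, w (x i.succ) (x i.castSucc) else 0) := by
    intro i hi
    have hset : ((Finset.univ \ A) ∪ {i} : Finset V) \ ({i} : Finset V) = Finset.univ \ A := by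
      ext v
      simp only [Finset.mem_sdiff, Finset.mem_union, Finset.mem_singleton, Finset.mem_univ,
        true_and]
      constructor
      · rintro ⟨h1 | h1, h2⟩
        · exact h1
        · exact absurd h1 h2
      · intro hv
        exact ⟨Or.inl hv, fun hvi => hv (hvi ▸ hi)⟩
    refine if_congr ?_ rfl rfl
    simp only [hset, Finset.mem_singleton, and_assoc]
  rw [Finset.sum_congr rfl hstep]
  by_cases hR : x 0 = j ∧ Function.Injective x ∧
      (∀ m : Fin (k + 1), (m : ℕ) < k → x m ∈ Finset.univ \ A)
  · have hL : ∀ i ∈ A, (if (x 0 = j ∧ Function.Injective x ∧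
        (∀ m : Fin (k + 1), (m : ℕ) < k → x m ∈ Finset.univ \ A)) ∧ x (Fin.last k) = i
        then ∏ i : Fin k, w (x i.succ) (x i.castSucc) else 0)
        = (if x (Fin.last k) = i then ∏ i : Fin k, w (x i.succ) (x i.castSucc) else 0) :=
      fun i _ => if_congr (and_iff_right hR) rfl rfl
    rw [Finset.sum_congr rfl hL,
      Finset.sum_ite_eq A (x (Fin.last k)) (fun _ => ∏ i : Fin k, w (x i.succ) (x i.castSucc))]
    obtain ⟨h0, hinj, hmem⟩ := hR
    by_cases hlast : x (Fin.last k) ∈ A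
    · rw [if_pos hlast, if_pos ⟨h0, hinj, hmem, hlast⟩]
    · rw [if_neg hlast, if_neg fun h => hlast h.2.2.2]
  · have h1 : ∀ i ∈ A, (if (x 0 = j ∧ Function.Injective x ∧
        (∀ m : Fin (k + 1), (m : ℕ) < k → x m ∈ Finset.univ \ A)) ∧ x (Fin.last k) = i
        then ∏ i : Fin k, w (x i.succ) (x i.castSucc) else 0) = 0 := by
      intro i _
      exact if_neg fun h => hR h.1
    rw [Finset.sum_congr rfl h1, Finset.sum_const, smul_zero, if_neg]
    rintro ⟨h0, hinj, hmem, -⟩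
    exact hR ⟨h0, hinj, hmem⟩

theorem stmt1 {V : Type*} [Fintype V] [DecidableEq V] (w : V → V → ℝ)
    (hw0 : ∀ i j : V, 0 ≤ w i j)
    (hw1 : ∀ j : V, ∑ i ∈ Finset.univ.erase j, w i j ≤ 1)
    (A : Finset V) (hA : A.Nonempty) :
    sigmaInfl w Finset.univ A
      = ∑ i ∈ A, sigmaInfl w ((Finset.univ \ A) ∪ {i}) {i} := by
  classical
  unfold sigmaInfl
  calc ∑ j ∈ Finset.univ, cPath w Finset.univ A j
      = ∑ j ∈ Finset.univ, ∑ i ∈ A, cPath w ((Finset.univ \ A) ∪ {i}) {i} j :=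
        Finset.sum_congr rfl fun j _ => (key_decomp w A j).symm
    _ = ∑ i ∈ A, ∑ j ∈ Finset.univ, cPath w ((Finset.univ \ A) ∪ {i}) {i} j :=
        Finset.sum_comm
    _ = ∑ i ∈ A, ∑ j ∈ (Finset.univ \ A) ∪ {i}, cPath w ((Finset.univ \ A) ∪ {i}) {i} j := by
        refine Finset.sum_congr rfl fun i hi => ?_
        refine (Finset.sum_subset (Finset.subset_univ _) fun j _ hj => ?_).symm
        exact cPath_eq_zero w _ _ j (by simp) hj
end

section
/- For every set A ⊆ V, every node v ∈ V \ A and every node j ∉ A ∪ {v}, one has c(j → A ∪ {v}) = c^{V \ A}(j → {v}) + c^{V \ {v}}(j → A); that is, the probability of reaching A ∪ {v} through an acyclic path splits into the probability of reaching v while avoiding A plus the probability of reaching A while avoiding v. -/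
open Finset

theorem stmt4 {V : Type*} [Fintype V] [DecidableEq V] (w : V → V → ℝ)
    (hw0 : ∀ i j : V, 0 ≤ w i j)
    (hw1 : ∀ j : V, ∑ i ∈ Finset.univ.erase j, w i j ≤ 1)
    (A : Finset V) (v : V) (hv : v ∉ A) (j : V) (hj : j ∉ insert v A) :
    cPath w Finset.univ (insert v A) j
      = cPath w (Finset.univ \ A) {v} j + cPath w (Finset.univ.erase v) A j := by
  classical
  unfold cPath
  have hzero : ∀ (W D : Finset V) (k : ℕ), Fintype.card V ≤ k →
      (∑ x : Fin (k + 1) → V,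
        if x 0 = j ∧ Function.Injective x ∧
            (∀ m : Fin (k + 1), (m : ℕ) < k → x m ∈ W \ D) ∧ x (Fin.last k) ∈ D
        then ∏ i : Fin k, w (x i.succ) (x i.castSucc) else 0) = 0 := by
    intro W D k hk
    refine Finset.sum_eq_zero fun x _ => ?_
    rw [if_neg]
    rintro ⟨-, hinj, -, -⟩
    have := Fintype.card_le_of_injective x hinj
    simp only [Fintype.card_fin] at this
    omega
  have hs2 : Summable (fun k : ℕ => ∑ x : Fin (k + 1) → V,
      if x 0 = j ∧ Function.Injective x ∧
          (∀ m : Fin (k + 1), (m : ℕ) < k → x m ∈ (Finset.univ \ A) \ {v}) ∧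
          x (Fin.last k) ∈ ({v} : Finset V)
      then ∏ i : Fin k, w (x i.succ) (x i.castSucc) else 0) := by
    apply summable_of_ne_finset_zero (s := Finset.range (Fintype.card V))
    intro k hk
    exact hzero _ _ k (by simpa using hk)
  have hs3 : Summable (fun k : ℕ => ∑ x : Fin (k + 1) → V,
      if x 0 = j ∧ Function.Injective x ∧
          (∀ m : Fin (k + 1), (m : ℕ) < k → x m ∈ (Finset.univ.erase v) \ A) ∧
          x (Fin.last k) ∈ A
      then ∏ i : Fin k, w (x i.succ) (x i.castSucc) else 0) := by
    apply summable_of_ne_finset_zero (s := Finset.range (Fintype.card V))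
    intro k hk
    exact hzero _ _ k (by simpa using hk)
  rw [← Summable.tsum_add hs2 hs3]
  refine tsum_congr fun k => ?_
  rw [← Finset.sum_add_distrib]
  refine Finset.sum_congr rfl fun x _ => ?_
  set p := ∏ i : Fin k, w (x i.succ) (x i.castSucc) with hp
  have hmem1 : ∀ y : V, y ∈ Finset.univ \ insert v A ↔ y ≠ v ∧ y ∉ A := by
    intro y; simp [not_or]
  have hmem2 : ∀ y : V, y ∈ (Finset.univ \ A) \ ({v} : Finset V) ↔ y ≠ v ∧ y ∉ A := by
    intro y; simp [and_comm]
  have hmem3 : ∀ y : V, y ∈ (Finset.univ.erase v) \ A ↔ y ≠ v ∧ y ∉ A := by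
    intro y; simp
  by_cases h2 : x 0 = j ∧ Function.Injective x ∧
      (∀ m : Fin (k + 1), (m : ℕ) < k → x m ∈ (Finset.univ \ A) \ {v}) ∧
      x (Fin.last k) ∈ ({v} : Finset V)
  · obtain ⟨h0, hinj, hint, hlast⟩ := h2
    have hlv : x (Fin.last k) = v := by simpa using hlast
    have h3 : ¬ (x 0 = j ∧ Function.Injective x ∧
        (∀ m : Fin (k + 1), (m : ℕ) < k → x m ∈ (Finset.univ.erase v) \ A) ∧
        x (Fin.last k) ∈ A) := by
      rintro ⟨-, -, -, hA⟩
      rw [hlv] at hA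
      exact hv hA
    rw [if_pos ⟨h0, hinj, fun m hm => (hmem1 _).2 ((hmem2 _).1 (hint m hm)),
        by simp [hlv]⟩, if_pos ⟨h0, hinj, hint, hlast⟩, if_neg h3, add_zero]
  · by_cases h3 : x 0 = j ∧ Function.Injective x ∧
        (∀ m : Fin (k + 1), (m : ℕ) < k → x m ∈ (Finset.univ.erase v) \ A) ∧
        x (Fin.last k) ∈ A
    · obtain ⟨h0, hinj, hint, hlast⟩ := h3
      rw [if_pos ⟨h0, hinj, fun m hm => (hmem1 _).2 ((hmem3 _).1 (hint m hm)),
          Finset.mem_insert_of_mem hlast⟩, if_neg h2,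
          if_pos ⟨h0, hinj, hint, hlast⟩, zero_add]
    · rw [if_neg h2, if_neg h3, add_zero]
      rw [if_neg]
      rintro ⟨h0, hinj, hint, hlast⟩
      rcases Finset.mem_insert.1 hlast with hl | hl
      · exact h2 ⟨h0, hinj, fun m hm => (hmem2 _).2 ((hmem1 _).1 (hint m hm)),
          by simp [hl]⟩
      · exact h3 ⟨h0, hinj, fun m hm => (hmem3 _).2 ((hmem1 _).1 (hint m hm)), hl⟩
end

section
/- For every set A ⊆ V and distinct nodes j, v ∉ A, the via-v acyclic path probability decomposes at the first visit to v: c(j →v→ A) = ∑_{L' ⊆ (V \ A) \ {j,v}} ∑_{L ∈ Π(L')} p_{j,v}(L) · c^{V \ (L' ∪ {j})}(v → A). -/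
open Finset

set_option linter.unusedSectionVars false

section Aux
open List



variable {V : Type*} [Fintype V] [DecidableEq V]

noncomputable def lw (w : V → V → ℝ) : List V → ℝ
  | a :: b :: t => w b a * lw w (b :: t)
  | _ => 1

@[simp] lemma lw_nil (w : V → V → ℝ) : lw w [] = 1 := rfl
@[simp] lemma lw_single (w : V → V → ℝ) (a : V) : lw w [a] = 1 := rfl
@[simp] lemma lw_cons_cons (w : V → V → ℝ) (a b : V) (t : List V) :
    lw w (a :: b :: t) = w b a * lw w (b :: t) := rfl

lemma lw_ofFn (w : V → V → ℝ) : ∀ (k : ℕ) (x : Fin (k+1) → V),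
    lw w (List.ofFn x) = ∏ i : Fin k, w (x i.succ) (x i.castSucc)
  | 0, x => by simp [List.ofFn_succ]
  | (k+1), x => by
    have IH := lw_ofFn w k (fun i => x i.succ)
    rw [List.ofFn_succ (f := x), List.ofFn_succ (f := fun i => x i.succ), lw_cons_cons,
      ← List.ofFn_succ (f := fun i => x i.succ), IH, Fin.prod_univ_succ
        (fun i : Fin (k+1) => w (x i.succ) (x i.castSucc))]
    simp only [Fin.succ_zero_eq_one, Fin.castSucc_zero]
    congr 1

def PL (W D : Finset V) (j : V) (l : List V) : Prop :=
  l.head? = some j ∧ (∀ a ∈ l.dropLast, a ∈ W \ D) ∧ (∀ a, l.getLast? = some a → a ∈ D)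

lemma ofFn_decomp {k : ℕ} (x : Fin (k+1) → V) :
    (List.ofFn x).dropLast = List.ofFn (fun i : Fin k => x i.castSucc) ∧
    (List.ofFn x).getLast? = some (x (Fin.last k)) := by
  rw [List.ofFn_succ' x]
  constructor
  · rw [List.concat_eq_append, List.dropLast_append_of_ne_nil (by simp)]
    simp
  · simp

lemma cond_iff {k : ℕ} (W D : Finset V) (j : V) (x : Fin (k+1) → V) :
    (x 0 = j ∧ Function.Injective x ∧
        (∀ m : Fin (k + 1), (m : ℕ) < k → x m ∈ W \ D) ∧ x (Fin.last k) ∈ D) ↔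
    ((List.ofFn x).Nodup ∧ PL W D j (List.ofFn x)) := by
  obtain ⟨hd, hl⟩ := ofFn_decomp x
  have hh : (List.ofFn x).head? = some (x 0) := by rw [List.ofFn_succ]; rfl
  constructor
  · rintro ⟨h0, hinj, hmid, hlast⟩
    refine ⟨List.nodup_ofFn.2 hinj, ?_, ?_, ?_⟩
    · rw [hh, h0]
    · intro a ha
      rw [hd, List.mem_ofFn] at ha
      obtain ⟨i, rfl⟩ := ha
      exact hmid i.castSucc (by simpa using i.isLt)
    · intro a ha
      rw [hl] at ha
      exact (Option.some_injective _ ha) ▸ hlast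
  · rintro ⟨hnd, h1, h2, h3⟩
    refine ⟨by rw [hh] at h1; exact Option.some_injective _ h1,
      List.nodup_ofFn.1 hnd, ?_, h3 _ hl⟩
    intro m hm
    apply h2
    rw [hd, List.mem_ofFn]
    exact ⟨⟨(m : ℕ), hm⟩, by simp [Fin.castSucc, Fin.ext_iff]⟩

def Lk (V : Type*) [Fintype V] [DecidableEq V] (k : ℕ) : Finset (List V) :=
  (Finset.univ : Finset (Fin (k+1) → V)).image List.ofFn

lemma length_of_mem_Lk {k : ℕ} {l : List V} (h : l ∈ Lk V k) : l.length = k + 1 := by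
  rw [Lk, Finset.mem_image] at h
  obtain ⟨x, -, rfl⟩ := h
  simp

def nlists (V : Type*) [Fintype V] [DecidableEq V] : Finset (List V) :=
  (Finset.range (Fintype.card V)).biUnion (fun k => (Lk V k).filter List.Nodup)

lemma mem_nlists {l : List V} : l ∈ nlists V ↔ l.Nodup ∧ l ≠ [] := by
  rw [nlists, Finset.mem_biUnion]
  constructor
  · rintro ⟨k, -, hl⟩
    rw [Finset.mem_filter] at hl
    refine ⟨hl.2, ?_⟩
    have := length_of_mem_Lk hl.1
    intro h; rw [h] at this; simp at this
  · rintro ⟨hnd, hne⟩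
    have hlen : 1 ≤ l.length := List.length_pos_iff.2 hne
    have hcard : l.length ≤ Fintype.card V := hnd.length_le_card
    refine ⟨l.length - 1, Finset.mem_range.2 (by omega), Finset.mem_filter.2 ⟨?_, hnd⟩⟩
    rw [Lk, Finset.mem_image]
    have hk : l.length - 1 + 1 = l.length := by omega
    refine ⟨fun i => l.get (Fin.cast hk i), Finset.mem_univ _, ?_⟩
    apply List.ext_get (by simp [hk])
    intro n h1 h2
    simp only [List.get_eq_getElem, List.getElem_ofFn]
    rfl

instance (W D : Finset V) (j : V) : DecidablePred (PL W D j) := fun l => by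
  unfold PL; infer_instance

lemma ite_ite_and {p q : Prop} [Decidable p] [Decidable q] (x : ℝ) :
    (if p then (if q then x else 0) else 0) = if p ∧ q then x else 0 := by
  by_cases hp : p <;> by_cases hq : q <;> simp [hp, hq]

lemma pairwise_disj : (↑(Finset.range (Fintype.card V)) : Set ℕ).PairwiseDisjoint
    (fun k => Finset.filter List.Nodup (Lk V k)) := by
  intro a _ b _ hab
  simp only [Function.onFun, Finset.disjoint_left]
  intro l hla hlb
  rw [Finset.mem_filter] at hla hlb
  have := length_of_mem_Lk hla.1
  have := length_of_mem_Lk hlb.1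
  exact hab (by omega)

lemma cPath_eq (w : V → V → ℝ) (W D : Finset V) (j : V) :
    cPath w W D j = ∑ l ∈ nlists V, if PL W D j l then lw w l else 0 := by
  classical
  unfold cPath
  rw [tsum_eq_sum (s := Finset.range (Fintype.card V)) ?h]
  case h =>
    intro k hk
    apply Finset.sum_eq_zero
    intro x _
    rw [if_neg]
    rintro ⟨-, hinj, -, -⟩
    have := Fintype.card_le_of_injective x hinj
    simp only [Fintype.card_fin, Finset.mem_range, not_lt] at this hk
    omega
  rw [nlists, Finset.sum_biUnion pairwise_disj]
  apply Finset.sum_congr rfl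
  intro k _
  rw [Finset.sum_filter]
  rw [Lk, Finset.sum_image (fun x _ y _ h => List.ofFn_injective h)]
  apply Finset.sum_congr rfl
  intro x _
  rw [ite_ite_and]
  exact if_congr (cond_iff W D j x) (lw_ofFn w k x).symm rfl

lemma via_iff {k : ℕ} (x : Fin (k+1) → V) (v : V) :
    (∃ u : Fin (k+1), (u : ℕ) < k ∧ x u = v) ↔ v ∈ (List.ofFn x).dropLast := by
  rw [(ofFn_decomp x).1, List.mem_ofFn]
  constructor
  · rintro ⟨u, hu, rfl⟩
    exact ⟨⟨(u : ℕ), hu⟩, by simp [Fin.castSucc, Fin.ext_iff]⟩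
  · rintro ⟨i, hi⟩
    exact ⟨i.castSucc, by simpa using i.isLt, hi⟩

lemma cPathVia_eq (w : V → V → ℝ) (W D : Finset V) (j v : V) :
    cPathVia w W D j v
      = ∑ l ∈ nlists V, if PL W D j l ∧ v ∈ l.dropLast then lw w l else 0 := by
  classical
  unfold cPathVia
  rw [tsum_eq_sum (s := Finset.range (Fintype.card V)) ?h]
  case h =>
    intro k hk
    apply Finset.sum_eq_zero
    intro x _
    rw [if_neg]
    rintro ⟨-, hinj, -, -, -⟩
    have := Fintype.card_le_of_injective x hinj
    simp only [Fintype.card_fin, Finset.mem_range, not_lt] at this hk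
    omega
  rw [nlists, Finset.sum_biUnion pairwise_disj]
  apply Finset.sum_congr rfl
  intro k _
  rw [Finset.sum_filter]
  rw [Lk, Finset.sum_image (fun x _ y _ h => List.ofFn_injective h)]
  apply Finset.sum_congr rfl
  intro x _
  rw [ite_ite_and]
  refine if_congr ?_ (lw_ofFn w k x).symm rfl
  rw [← via_iff]
  constructor
  · rintro ⟨h1, h2, h3, h4, h5⟩
    have h := (cond_iff W D j x).1 ⟨h1, h2, h3, h4⟩
    exact ⟨h.1, h.2, h5⟩
  · rintro ⟨hn, hp, hv⟩
    have h := (cond_iff W D j x).2 ⟨hn, hp⟩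
    exact ⟨h.1, h.2.1, h.2.2.1, h.2.2.2, hv⟩

lemma pjv_lw (w : V → V → ℝ) (v : V) : ∀ (L : List V) (j : V) (t : List V),
    t.head? = some v → lw w (j :: (L ++ t)) = pjv w j v L * lw w t
  | [], j, t, ht => by
    cases t with
    | nil => simp at ht
    | cons b t' =>
      simp only [Option.some.injEq, List.head?_cons] at ht
      subst ht
      simp [pjv]
  | (a :: L'), j, t, ht => by
    rw [List.cons_append, lw_cons_cons, pjv, pjv_lw w v L' a t ht, mul_assoc]

lemma takeWhile_app (p : V → Bool) (v : V) : ∀ (L t : List V), (∀ a ∈ L, p a = true) →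
    t.head? = some v → p v = false →
    (L ++ t).takeWhile p = L ∧ (L ++ t).dropWhile p = t
  | [], t, _, ht, hpv => by
    cases t with
    | nil => simp at ht
    | cons b t' =>
      simp only [Option.some.injEq, List.head?_cons] at ht
      subst ht
      simp [List.takeWhile, List.dropWhile, hpv]
  | (a :: L'), t, hL, ht, hpv => by
    have ha : p a = true := hL a (by simp)
    have h := takeWhile_app p v L' t (fun x hx => hL x (by simp [hx])) ht hpv
    simp [List.takeWhile_cons, List.dropWhile_cons, ha, h.1, h.2]

lemma mem_dropLast_or {t : List V} (h : t ≠ []) {a : V} (ha : a ∈ t) :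
    a ∈ t.dropLast ∨ a = t.getLast h := by
  rw [← List.dropLast_append_getLast h, List.mem_append, List.mem_singleton] at ha
  exact ha

theorem stmt6' (w : V → V → ℝ)
    (A : Finset V) (j v : V) (hj : j ∉ A) (hv : v ∉ A) (hjv : j ≠ v) :
    cPathVia w Finset.univ A j v
      = ∑ L' ∈ ((Finset.univ \ A) \ {j, v}).powerset,
          (L'.toList.permutations.map
            (fun L => pjv w j v L * cPath w (Finset.univ \ insert j L') A v)).sum := by
  classical
  rw [cPathVia_eq]
  have step1 : ∀ L' ∈ ((Finset.univ \ A) \ {j, v}).powerset,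
      (L'.toList.permutations.map
        (fun L => pjv w j v L * cPath w (Finset.univ \ insert j L') A v)).sum
      = ∑ L ∈ L'.toList.permutations.toFinset,
          ∑ t ∈ (nlists V).filter (PL (Finset.univ \ insert j L') A v),
            pjv w j v L * lw w t := by
    intro L' _
    rw [← List.sum_toFinset _ (List.nodup_permutations _ (Finset.nodup_toList L'))]
    apply Finset.sum_congr rfl
    intro L _
    rw [cPath_eq, Finset.mul_sum, Finset.sum_filter]
    apply Finset.sum_congr rfl
    intro t _
    rw [mul_ite, mul_zero]
  rw [Finset.sum_congr rfl step1, Finset.sum_sigma', Finset.sum_sigma',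
    ← Finset.sum_filter]
  set p : V → Bool := fun a => decide (a ≠ v) with hp
  -- forward decomposition facts
  have decomp : ∀ l ∈ Finset.filter (fun a => PL Finset.univ A j a ∧ v ∈ a.dropLast) (nlists V),
      l = j :: (l.tail.takeWhile p ++ l.tail.dropWhile p) ∧
      (l.tail.dropWhile p).head? = some v := by
    intro l hl
    rw [Finset.mem_filter, mem_nlists] at hl
    obtain ⟨⟨hnd, hne⟩, ⟨hhead, hmid, hlast⟩, hvd⟩ := hl
    obtain ⟨m, rfl⟩ : ∃ m, l = j :: m := by
      cases l with
      | nil => exact absurd rfl hne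
      | cons a m => exact ⟨m, by rw [show a = j by simpa using hhead]⟩
    simp only [List.tail_cons]
    have hvm : v ∈ m := by
      have : v ∈ j :: m := (List.dropLast_sublist _).subset hvd
      rcases List.mem_cons.1 this with h | h
      · exact absurd h.symm hjv
      · exact h
    have hvT : v ∈ m.dropWhile p := by
      have := (List.takeWhile_append_dropWhile : m.takeWhile p ++ m.dropWhile p = m)
      rw [← this, List.mem_append] at hvm
      rcases hvm with h | h
      · exact absurd (List.mem_takeWhile_imp h) (by simp [hp])
      · exact h
    have hTne : m.dropWhile p ≠ [] := List.ne_nil_of_mem hvT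
    have hhd : (m.dropWhile p).head hTne = v := by
      have := List.head_dropWhile_not p hTne
      simpa [hp] using this
    refine ⟨by simp [List.takeWhile_append_dropWhile], ?_⟩
    rw [List.head?_eq_head hTne, hhd]
  apply Finset.sum_nbij'
    (fun l => ⟨⟨(l.tail.takeWhile p).toFinset, l.tail.takeWhile p⟩, l.tail.dropWhile p⟩)
    (fun b => j :: (b.fst.snd ++ b.snd))
  · -- hi : forward membership
    intro l hl
    obtain ⟨hF1, hF2⟩ := decomp l hl
    rw [Finset.mem_filter, mem_nlists] at hl
    obtain ⟨⟨hnd, hne⟩, ⟨hhead, hmid, hlast⟩, hvd⟩ := hl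
    set L := l.tail.takeWhile p with hL
    set T := l.tail.dropWhile p with hT
    have hTne : T ≠ [] := by intro h; rw [h] at hF2; simp at hF2
    have hmLT : l.tail = L ++ T := (List.takeWhile_append_dropWhile : l.tail.takeWhile p ++ l.tail.dropWhile p = l.tail).symm
    have hlform : l = (j :: L) ++ T := by rw [hF1]; simp
    have hndLT : (j :: (L ++ T)).Nodup := hF1 ▸ hnd
    have hjLT : j ∉ L ++ T := (List.nodup_cons.1 hndLT).1
    have hndL : L.Nodup := ((List.nodup_append.1 (List.nodup_cons.1 hndLT).2)).1
    have hndT : T.Nodup := ((List.nodup_append.1 (List.nodup_cons.1 hndLT).2)).2.1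
    have hdisj : L.Disjoint T := fun a ha hb => ((List.nodup_append.1 (List.nodup_cons.1 hndLT).2)).2.2 a ha a hb rfl
    have hdrop : l.dropLast = (j :: L) ++ T.dropLast := by
      rw [hlform, List.dropLast_append_of_ne_nil hTne]
    have hLne : ∀ a ∈ L, a ≠ v := fun a ha => by simpa [hp] using List.mem_takeWhile_imp ha
    have hLmid : ∀ a ∈ L, a ∈ Finset.univ \ A := by
      intro a ha
      apply hmid
      rw [hdrop]
      exact List.mem_append_left _ (List.mem_cons_of_mem _ ha)
    refine Finset.mem_sigma.2 ⟨Finset.mem_sigma.2 ⟨?_, ?_⟩, ?_⟩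
    · rw [Finset.mem_powerset]
      intro a ha
      rw [List.mem_toFinset] at ha
      have haj : a ≠ j := fun h => hjLT (h ▸ List.mem_append_left _ ha)
      simp only [Finset.mem_sdiff, Finset.mem_insert, Finset.mem_singleton]
      exact ⟨Finset.mem_sdiff.1 (hLmid a ha), by push_neg; exact ⟨haj, hLne a ha⟩⟩
    · rw [List.mem_toFinset, List.mem_permutations]
      exact (List.toFinset_toList hndL).symm
    · rw [Finset.mem_filter, mem_nlists]
      refine ⟨⟨hndT, hTne⟩, hF2, ?_, ?_⟩
      · intro a ha
        have haT : a ∈ T := (List.dropLast_sublist _).subset ha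
        have haA : a ∈ Finset.univ \ A := by
          apply hmid
          rw [hdrop]
          exact List.mem_append_right _ ha
        have haj : a ≠ j := fun h => hjLT (h ▸ List.mem_append_right _ haT)
        have haL : a ∉ L := fun h => hdisj h haT
        simp only [Finset.mem_sdiff, Finset.mem_insert, List.mem_toFinset] at *
        exact ⟨⟨Finset.mem_univ a, by push_neg; exact ⟨haj, haL⟩⟩, haA.2⟩
      · intro a ha
        apply hlast
        rw [hlform, List.getLast?_append_of_ne_nil _ hTne]
        exact ha
  · -- hj : backward membership
    rintro ⟨⟨L', L⟩, t⟩ hb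
    simp only [Finset.mem_sigma, Finset.mem_filter, Finset.mem_powerset,
      List.mem_toFinset, List.mem_permutations, mem_nlists] at hb
    obtain ⟨⟨hL', hLperm⟩, ⟨hndt, htne⟩, hhd, hmidt, hlastt⟩ := hb
    have hmemL : ∀ a, a ∈ L ↔ a ∈ L' := fun a => by
      rw [hLperm.mem_iff, Finset.mem_toList]
    have hndL : L.Nodup := hLperm.nodup_iff.2 (Finset.nodup_toList _)
    have hL'facts : ∀ a ∈ L', a ∉ A ∧ a ≠ j ∧ a ≠ v := by
      intro a ha
      have := hL' ha
      simp only [Finset.mem_sdiff, Finset.mem_insert, Finset.mem_singleton] at this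
      push_neg at this
      exact ⟨this.1.2, this.2⟩
    have htj : ∀ a ∈ t, a ≠ j ∧ a ∉ L' := by
      intro a ha
      rcases mem_dropLast_or htne ha with h | h
      · have := hmidt a h
        simp only [Finset.mem_sdiff, Finset.mem_insert] at this
        push_neg at this
        exact ⟨this.1.2.1, this.1.2.2⟩
      · have haA : a ∈ A := hlastt a (by rw [List.getLast?_eq_getLast htne, h])
        exact ⟨fun hh => hj (hh ▸ haA), fun hh => (hL'facts a hh).1 haA⟩
    have hhdt : t = v :: t.tail := by
      cases t with
      | nil => exact absurd rfl htne
      | cons b t' => simp only [List.head?_cons, Option.some.injEq] at hhd; rw [hhd]; rfl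
    have httne : t.tail ≠ [] := by
      intro h
      rw [h] at hhdt
      have : v ∈ A := hlastt v (by rw [hhdt]; rfl)
      exact hv this
    have hvdl : v ∈ t.dropLast := by
      have hdl : t.dropLast = v :: t.tail.dropLast := by
        conv_lhs => rw [hhdt]
        exact List.dropLast_cons_of_ne_nil httne
      rw [hdl]
      exact List.mem_cons_self
    have hform : j :: (L ++ t) = (j :: L) ++ t := by simp
    have hdrop2 : (j :: (L ++ t)).dropLast = (j :: L) ++ t.dropLast := by
      rw [hform, List.dropLast_append_of_ne_nil htne]
    rw [Finset.mem_filter, mem_nlists]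
    refine ⟨⟨?_, by simp⟩, ⟨by simp, ?_, ?_⟩, ?_⟩
    · rw [List.nodup_cons, List.nodup_append]
      refine ⟨?_, hndL, hndt, ?_⟩
      · rw [List.mem_append]
        rintro (h | h)
        · exact (hL'facts j ((hmemL j).1 h)).2.1 rfl
        · exact (htj j h).1 rfl
      · intro a haL b hat hab
        subst hab
        exact (htj a hat).2 ((hmemL a).1 haL)
    · intro a ha
      rw [hdrop2] at ha
      rcases List.mem_append.1 ha with h | h
      · rcases List.mem_cons.1 h with h1 | h1
        · subst h1; simp [hj]
        · have := (hL'facts a ((hmemL a).1 h1)).1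
          simp [this]
      · have := hmidt a h
        simp only [Finset.mem_sdiff] at this ⊢
        exact ⟨Finset.mem_univ a, this.2⟩
    · intro a ha
      apply hlastt
      rw [hform, List.getLast?_append_of_ne_nil _ htne] at ha
      exact ha
    · rw [hdrop2]
      exact List.mem_append_right _ hvdl
  · -- left inverse
    intro l hl
    exact (decomp l hl).1.symm
  · -- right inverse
    rintro ⟨⟨L', L⟩, t⟩ hb
    simp only [Finset.mem_sigma, Finset.mem_filter, Finset.mem_powerset,
      List.mem_toFinset, List.mem_permutations, mem_nlists] at hb
    obtain ⟨⟨hL', hLperm⟩, ⟨hndt, htne⟩, hhd, hmidt, hlastt⟩ := hb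
    have hpvL : ∀ a ∈ L, p a = true := by
      intro a ha
      have ha' : a ∈ L' := by rwa [hLperm.mem_iff, Finset.mem_toList] at ha
      have := hL' ha'
      simp only [Finset.mem_sdiff, Finset.mem_insert, Finset.mem_singleton] at this
      push_neg at this
      simp [hp, this.2.2]
    have hsplit := takeWhile_app p v L t hpvL hhd (by simp [hp])
    have hLF : L.toFinset = L' := by
      ext a
      rw [List.mem_toFinset, hLperm.mem_iff, Finset.mem_toList]
    simp only [List.tail_cons, hsplit.1, hsplit.2, hLF]
  · -- values
    intro l hl
    obtain ⟨hF1, hF2⟩ := decomp l hl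
    conv_lhs => rw [hF1]
    exact pjv_lw w v _ j _ hF2

end Aux

theorem stmt6 {V : Type*} [Fintype V] [DecidableEq V] (w : V → V → ℝ)
    (hw0 : ∀ i j : V, 0 ≤ w i j)
    (hw1 : ∀ j : V, ∑ i ∈ Finset.univ.erase j, w i j ≤ 1)
    (A : Finset V) (j v : V) (hj : j ∉ A) (hv : v ∉ A) (hjv : j ≠ v) :
    cPathVia w Finset.univ A j v
      = ∑ L' ∈ ((Finset.univ \ A) \ {j, v}).powerset,
          (L'.toList.permutations.map
            (fun L => pjv w j v L * cPath w (Finset.univ \ insert j L') A v)).sum := by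
  exact stmt6' w A j v hj hv hjv
end

section
/- For every set A ⊆ V and distinct nodes j, v ∉ A, the via-v acyclic path probability is bounded by the A-avoiding hitting probability of v: c(j →v→ A) ≤ c^{V \ A}(j → {v}). -/
open Finset

section Aux

variable {V : Type*} [Fintype V] [DecidableEq V]

/-- term of `cPath` at length `k` -/
noncomputable def pT (w : V → V → ℝ) (W D : Finset V) (j : V) (k : ℕ) : ℝ := by
  classical
  exact ∑ x : Fin (k + 1) → V,
    if x 0 = j ∧ Function.Injective x ∧
        (∀ m : Fin (k + 1), (m : ℕ) < k → x m ∈ W \ D) ∧ x (Fin.last k) ∈ D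
    then ∏ i : Fin k, w (x i.succ) (x i.castSucc) else 0

/-- term of `cPathVia` at length `k` -/
noncomputable def vT (w : V → V → ℝ) (W D : Finset V) (j v : V) (k : ℕ) : ℝ := by
  classical
  exact ∑ x : Fin (k + 1) → V,
    if x 0 = j ∧ Function.Injective x ∧
        (∀ m : Fin (k + 1), (m : ℕ) < k → x m ∈ W \ D) ∧ x (Fin.last k) ∈ D ∧
        (∃ u : Fin (k + 1), (u : ℕ) < k ∧ x u = v)
    then ∏ i : Fin k, w (x i.succ) (x i.castSucc) else 0

noncomputable def cP (w : V → V → ℝ) (W D : Finset V) (j : V) (n : ℕ) : ℝ :=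
  ∑ k ∈ range n, pT w W D j k

noncomputable def cV (w : V → V → ℝ) (W D : Finset V) (j v : V) (n : ℕ) : ℝ :=
  ∑ k ∈ range n, vT w W D j v k

variable {w : V → V → ℝ} {W D : Finset V} {j v : V}

lemma pT_nonneg (hw0 : ∀ i j : V, 0 ≤ w i j) (k : ℕ) : 0 ≤ pT w W D j k := by
  classical
  refine Finset.sum_nonneg fun x _ => ?_
  split
  · exact Finset.prod_nonneg fun i _ => hw0 _ _
  · exact le_refl 0

lemma vT_nonneg (hw0 : ∀ i j : V, 0 ≤ w i j) (k : ℕ) : 0 ≤ vT w W D j v k := by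
  classical
  refine Finset.sum_nonneg fun x _ => ?_
  split
  · exact Finset.prod_nonneg fun i _ => hw0 _ _
  · exact le_refl 0

lemma cP_nonneg (hw0 : ∀ i j : V, 0 ≤ w i j) (n : ℕ) : 0 ≤ cP w W D j n :=
  Finset.sum_nonneg fun k _ => pT_nonneg hw0 k

lemma pT_eq_zero_of_card (k : ℕ) (hk : Fintype.card V ≤ k) : pT w W D j k = 0 := by
  classical
  refine Finset.sum_eq_zero fun x _ => ?_
  rw [if_neg]
  rintro ⟨-, hinj, -, -⟩
  have := Fintype.card_le_of_injective x hinj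
  simp [Fintype.card_fin] at this
  omega

lemma vT_eq_zero_of_card (k : ℕ) (hk : Fintype.card V ≤ k) : vT w W D j v k = 0 := by
  classical
  refine Finset.sum_eq_zero fun x _ => ?_
  rw [if_neg]
  rintro ⟨-, hinj, -, -⟩
  have := Fintype.card_le_of_injective x hinj
  simp [Fintype.card_fin] at this
  omega

lemma cPath_eq_cP : cPath w W D j = cP w W D j (Fintype.card V) := by
  have : cPath w W D j = ∑' k, pT w W D j k := rfl
  rw [this, cP]
  exact tsum_eq_sum (fun k hk => pT_eq_zero_of_card k (by simpa using hk))

lemma cPathVia_eq_cV : cPathVia w W D j v = cV w W D j v (Fintype.card V) := by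
  have : cPathVia w W D j v = ∑' k, vT w W D j v k := rfl
  rw [this, cV]
  exact tsum_eq_sum (fun k hk => vT_eq_zero_of_card k (by simpa using hk))

lemma pT_zero : pT w W D j 0 = if j ∈ D then 1 else 0 := by
  classical
  have h : pT w W D j 0 = ∑ a : V, if a = j ∧ a ∈ D then (1:ℝ) else 0 := by
    refine Fintype.sum_equiv (Equiv.funUnique (Fin 1) V) _ _ fun x => ?_
    have hinj : Function.Injective x := fun a b _ => Subsingleton.elim a b
    simp [hinj, Equiv.funUnique]
  rw [h]
  simp only [ite_and]
  rw [Finset.sum_ite_eq' Finset.univ j (fun a => if a ∈ D then (1:ℝ) else 0)]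
  simp

lemma vT_zero : vT w W D j v 0 = 0 := by
  classical
  refine Finset.sum_eq_zero fun x _ => ?_
  rw [if_neg]
  rintro ⟨-, -, -, -, u, hu, -⟩
  omega

/-- if `j ∉ W \ D` then paths of positive length vanish -/
lemma pT_succ_eq_zero (hj : j ∉ W \ D) (k : ℕ) : pT w W D j (k + 1) = 0 := by
  classical
  refine Finset.sum_eq_zero fun x _ => ?_
  rw [if_neg]
  rintro ⟨h0, -, hm, -⟩
  exact hj (h0 ▸ hm 0 (by simp))

lemma vT_succ_eq_zero (hj : j ∉ W \ D) (k : ℕ) : vT w W D j v (k + 1) = 0 := by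
  classical
  refine Finset.sum_eq_zero fun x _ => ?_
  rw [if_neg]
  rintro ⟨h0, -, hm, -⟩
  exact hj (h0 ▸ hm 0 (by simp))

lemma cP_eq_zero (hjW : j ∉ W) (hjD : j ∉ D) (n : ℕ) : cP w W D j n = 0 := by
  refine Finset.sum_eq_zero fun k hk => ?_
  cases k with
  | zero => rw [pT_zero, if_neg hjD]
  | succ k => exact pT_succ_eq_zero (by simp [hjW]) k

lemma cV_eq_zero (hj : j ∉ W \ D) (n : ℕ) : cV w W D j v n = 0 := by
  refine Finset.sum_eq_zero fun k hk => ?_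
  cases k with
  | zero => exact vT_zero
  | succ k => exact vT_succ_eq_zero hj k

lemma cP_mem_D (hjD : j ∈ D) (n : ℕ) : cP w W D j n = if n = 0 then 0 else 1 := by
  cases n with
  | zero => simp [cP]
  | succ n =>
    rw [cP, Finset.sum_range_succ']
    have h1 : ∀ k, pT w W D j (k + 1) = 0 := fun k => pT_succ_eq_zero (by simp [hjD]) k
    simp [h1, pT_zero, hjD]

lemma sum_fin_succ_eq {k : ℕ} (f : (Fin (k+2) → V) → ℝ) :
    ∑ x : Fin (k+2) → V, f x = ∑ i : V, ∑ y : Fin (k+1) → V, f (Fin.cons i y) := by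
  calc ∑ x : Fin (k+2) → V, f x
      = ∑ p : V × (Fin (k+1) → V), f (Fin.cons p.1 p.2) :=
        (Fintype.sum_equiv (Fin.consEquiv fun _ => V) _ _ fun p => rfl).symm
    _ = _ := Fintype.sum_prod_type _

lemma fin_eq_last {k : ℕ} (m : Fin (k+1)) (hm : ¬((m:ℕ) < k)) : m = Fin.last k := by
  have := m.isLt; exact Fin.ext (by simp [Fin.last]; omega)

lemma cons_prod {k : ℕ} (y : Fin (k+1) → V) (a : V) :
    ∏ i : Fin (k+1), w ((Fin.cons a y : Fin (k+2) → V) i.succ) ((Fin.cons a y : Fin (k+2) → V) i.castSucc)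
      = w (y 0) a * ∏ i : Fin k, w (y i.succ) (y i.castSucc) := by
  rw [Fin.prod_univ_succ]
  congr 1

lemma cons_cond (hjW : j ∈ W) (hjD : j ∉ D) {k : ℕ} (y : Fin (k+1) → V) :
    (Function.Injective (Fin.cons j y : Fin (k+2) → V) ∧
        (∀ m : Fin (k+2), (m : ℕ) < k+1 → (Fin.cons j y : Fin (k+2) → V) m ∈ W \ D) ∧
        (Fin.cons j y : Fin (k+2) → V) (Fin.last (k+1)) ∈ D)
      ↔ (Function.Injective y ∧
        (∀ m : Fin (k+1), (m : ℕ) < k → y m ∈ W.erase j \ D) ∧ y (Fin.last k) ∈ D) := by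
  rw [Fin.cons_injective_iff, ← Fin.succ_last, Fin.cons_succ]
  constructor
  · rintro ⟨⟨hrange, hinj⟩, hmem, hlast⟩
    refine ⟨hinj, fun m hm => ?_, hlast⟩
    have h1 : y m ∈ W \ D := by
      have := hmem m.succ (by simpa using hm)
      rwa [Fin.cons_succ] at this
    rw [Finset.mem_sdiff] at h1 ⊢
    rw [Finset.mem_erase]
    exact ⟨⟨fun h => hrange ⟨m, h.symm ▸ rfl⟩, h1.1⟩, h1.2⟩
  · rintro ⟨hinj, hmem, hlast⟩
    have hrange : j ∉ Set.range y := by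
      rintro ⟨m, hm⟩
      by_cases hmk : (m : ℕ) < k
      · have := hmem m hmk
        rw [Finset.mem_sdiff, Finset.mem_erase] at this
        exact this.1.1 hm
      · rw [fin_eq_last m hmk] at hm
        exact hjD (hm ▸ hlast)
    refine ⟨⟨hrange, hinj⟩, fun m hm => ?_, hlast⟩
    induction m using Fin.cases with
    | zero => rw [Fin.cons_zero]; exact Finset.mem_sdiff.2 ⟨hjW, hjD⟩
    | succ m' =>
      rw [Fin.cons_succ]
      have hm' : (m' : ℕ) < k := by simpa using hm
      have := hmem m' hm'
      rw [Finset.mem_sdiff, Finset.mem_erase] at this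
      exact Finset.mem_sdiff.2 ⟨this.1.2, this.2⟩

lemma cons_via (hjv : j ≠ v) {k : ℕ} (y : Fin (k+1) → V) :
    (∃ u : Fin (k+2), (u : ℕ) < k+1 ∧ (Fin.cons j y : Fin (k+2) → V) u = v)
      ↔ (∃ m : Fin (k+1), (m : ℕ) < k ∧ y m = v) := by
  constructor
  · rintro ⟨u, hu, huv⟩
    induction u using Fin.cases with
    | zero => exact absurd (by simpa using huv) hjv
    | succ m =>
      rw [Fin.cons_succ] at huv
      exact ⟨m, by simpa using hu, huv⟩
  · rintro ⟨m, hm, hmv⟩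
    exact ⟨m.succ, by simpa using hm, by rwa [Fin.cons_succ]⟩

lemma pT_succ (hjW : j ∈ W) (hjD : j ∉ D) (k : ℕ) :
    pT w W D j (k + 1) = ∑ i : V, w i j * pT w (W.erase j) D i k := by
  classical
  set G : (Fin (k+1) → V) → ℝ := fun y =>
    if Function.Injective y ∧ (∀ m : Fin (k+1), (m : ℕ) < k → y m ∈ W.erase j \ D) ∧
        y (Fin.last k) ∈ D
      then ∏ l : Fin k, w (y l.succ) (y l.castSucc) else 0 with hG
  have step1 : pT w W D j (k+1) = ∑ i : V, ∑ y : Fin (k+1) → V,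
      (if (Fin.cons i y : Fin (k+2) → V) 0 = j ∧
          Function.Injective (Fin.cons i y : Fin (k+2) → V) ∧
          (∀ m : Fin (k+2), (m : ℕ) < k+1 → (Fin.cons i y : Fin (k+2) → V) m ∈ W \ D) ∧
          (Fin.cons i y : Fin (k+2) → V) (Fin.last (k+1)) ∈ D
        then ∏ l : Fin (k+1), w ((Fin.cons i y : Fin (k+2) → V) l.succ)
            ((Fin.cons i y : Fin (k+2) → V) l.castSucc) else 0) :=
    sum_fin_succ_eq _
  have point : ∀ (i : V) (y : Fin (k+1) → V),
      (if (Fin.cons i y : Fin (k+2) → V) 0 = j ∧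
          Function.Injective (Fin.cons i y : Fin (k+2) → V) ∧
          (∀ m : Fin (k+2), (m : ℕ) < k+1 → (Fin.cons i y : Fin (k+2) → V) m ∈ W \ D) ∧
          (Fin.cons i y : Fin (k+2) → V) (Fin.last (k+1)) ∈ D
        then ∏ l : Fin (k+1), w ((Fin.cons i y : Fin (k+2) → V) l.succ)
            ((Fin.cons i y : Fin (k+2) → V) l.castSucc) else 0)
      = if i = j then w (y 0) j * G y else 0 := by
    intro i y
    by_cases hij : i = j
    · rw [hij, if_pos rfl]
      simp only [hG]
      by_cases hC : Function.Injective y ∧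
          (∀ m : Fin (k+1), (m : ℕ) < k → y m ∈ W.erase j \ D) ∧ y (Fin.last k) ∈ D
      · rw [if_pos hC, if_pos ⟨Fin.cons_zero _ _, (cons_cond hjW hjD y).2 hC⟩]
        exact cons_prod y j
      · rw [if_neg hC, mul_zero, if_neg]
        rintro ⟨-, h⟩
        exact hC ((cons_cond hjW hjD y).1 h)
    · rw [if_neg hij, if_neg]
      rintro ⟨h0, -⟩
      exact hij (by simpa using h0)
  rw [step1]
  calc ∑ i : V, ∑ y : Fin (k+1) → V, _
      = ∑ i : V, (if i = j then ∑ y : Fin (k+1) → V, w (y 0) j * G y else 0) := by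
        refine Finset.sum_congr rfl fun i _ => ?_
        rw [Finset.sum_congr rfl fun y _ => point i y]
        by_cases hij : i = j <;> simp [hij]
    _ = ∑ y : Fin (k+1) → V, w (y 0) j * G y := by
        rw [Finset.sum_ite_eq' Finset.univ j]
        simp
    _ = ∑ i : V, w i j * pT w (W.erase j) D i k := by
        have : ∀ i : V, w i j * pT w (W.erase j) D i k
            = ∑ y : Fin (k+1) → V, (if y 0 = i then w (y 0) j * G y else 0) := by
          intro i
          rw [show pT w (W.erase j) D i k = ∑ y : Fin (k+1) → V,
              (if y 0 = i ∧ Function.Injective y ∧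
                  (∀ m : Fin (k+1), (m : ℕ) < k → y m ∈ W.erase j \ D) ∧
                  y (Fin.last k) ∈ D
                then ∏ l : Fin k, w (y l.succ) (y l.castSucc) else 0) from rfl]
          rw [Finset.mul_sum]
          refine Finset.sum_congr rfl fun y _ => ?_
          by_cases h0 : y 0 = i
          · simp [hG, h0]
          · simp [h0]
        rw [Finset.sum_congr rfl fun i _ => this i, Finset.sum_comm]
        refine Finset.sum_congr rfl fun y _ => ?_
        rw [Finset.sum_ite_eq Finset.univ (y 0)]
        simp

lemma vT_succ (hjW : j ∈ W) (hjD : j ∉ D) (hvD : v ∉ D) (hjv : j ≠ v) (k : ℕ) :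
    vT w W D j v (k + 1) = ∑ i : V, w i j *
      (if i = v then pT w (W.erase j) D v k else vT w (W.erase j) D i v k) := by
  classical
  set G : (Fin (k+1) → V) → ℝ := fun y =>
    if Function.Injective y ∧ (∀ m : Fin (k+1), (m : ℕ) < k → y m ∈ W.erase j \ D) ∧
        y (Fin.last k) ∈ D ∧ (∃ m : Fin (k+1), (m : ℕ) < k ∧ y m = v)
      then ∏ l : Fin k, w (y l.succ) (y l.castSucc) else 0 with hG
  have hiff : ∀ y : Fin (k+1) → V,
      (Function.Injective (Fin.cons j y : Fin (k+2) → V) ∧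
        (∀ m : Fin (k+2), (m : ℕ) < k+1 → (Fin.cons j y : Fin (k+2) → V) m ∈ W \ D) ∧
        (Fin.cons j y : Fin (k+2) → V) (Fin.last (k+1)) ∈ D ∧
        (∃ u : Fin (k+2), (u : ℕ) < k+1 ∧ (Fin.cons j y : Fin (k+2) → V) u = v))
      ↔ (Function.Injective y ∧
        (∀ m : Fin (k+1), (m : ℕ) < k → y m ∈ W.erase j \ D) ∧ y (Fin.last k) ∈ D ∧
        (∃ m : Fin (k+1), (m : ℕ) < k ∧ y m = v)) := by
    intro y
    constructor
    · rintro ⟨h1, h2, h3, h4⟩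
      obtain ⟨a, b, c⟩ := (cons_cond hjW hjD y).1 ⟨h1, h2, h3⟩
      exact ⟨a, b, c, (cons_via hjv y).1 h4⟩
    · rintro ⟨a, b, c, d⟩
      obtain ⟨h1, h2, h3⟩ := (cons_cond hjW hjD y).2 ⟨a, b, c⟩
      exact ⟨h1, h2, h3, (cons_via hjv y).2 d⟩
  have step1 : vT w W D j v (k+1) = ∑ i : V, ∑ y : Fin (k+1) → V,
      (if (Fin.cons i y : Fin (k+2) → V) 0 = j ∧
          Function.Injective (Fin.cons i y : Fin (k+2) → V) ∧
          (∀ m : Fin (k+2), (m : ℕ) < k+1 → (Fin.cons i y : Fin (k+2) → V) m ∈ W \ D) ∧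
          (Fin.cons i y : Fin (k+2) → V) (Fin.last (k+1)) ∈ D ∧
          (∃ u : Fin (k+2), (u : ℕ) < k+1 ∧ (Fin.cons i y : Fin (k+2) → V) u = v)
        then ∏ l : Fin (k+1), w ((Fin.cons i y : Fin (k+2) → V) l.succ)
            ((Fin.cons i y : Fin (k+2) → V) l.castSucc) else 0) :=
    sum_fin_succ_eq _
  have point : ∀ (i : V) (y : Fin (k+1) → V),
      (if (Fin.cons i y : Fin (k+2) → V) 0 = j ∧
          Function.Injective (Fin.cons i y : Fin (k+2) → V) ∧
          (∀ m : Fin (k+2), (m : ℕ) < k+1 → (Fin.cons i y : Fin (k+2) → V) m ∈ W \ D) ∧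
          (Fin.cons i y : Fin (k+2) → V) (Fin.last (k+1)) ∈ D ∧
          (∃ u : Fin (k+2), (u : ℕ) < k+1 ∧ (Fin.cons i y : Fin (k+2) → V) u = v)
        then ∏ l : Fin (k+1), w ((Fin.cons i y : Fin (k+2) → V) l.succ)
            ((Fin.cons i y : Fin (k+2) → V) l.castSucc) else 0)
      = if i = j then w (y 0) j * G y else 0 := by
    intro i y
    by_cases hij : i = j
    · rw [hij, if_pos rfl]
      simp only [hG]
      by_cases hC : Function.Injective y ∧
          (∀ m : Fin (k+1), (m : ℕ) < k → y m ∈ W.erase j \ D) ∧ y (Fin.last k) ∈ D ∧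
          (∃ m : Fin (k+1), (m : ℕ) < k ∧ y m = v)
      · rw [if_pos hC, if_pos ⟨Fin.cons_zero _ _, (hiff y).2 hC⟩]
        exact cons_prod y j
      · rw [if_neg hC, mul_zero, if_neg]
        rintro ⟨-, h⟩
        exact hC ((hiff y).1 h)
    · rw [if_neg hij, if_neg]
      rintro ⟨h0, -⟩
      exact hij (by simpa using h0)
  rw [step1]
  calc ∑ i : V, ∑ y : Fin (k+1) → V, _
      = ∑ i : V, (if i = j then ∑ y : Fin (k+1) → V, w (y 0) j * G y else 0) := by
        refine Finset.sum_congr rfl fun i _ => ?_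
        rw [Finset.sum_congr rfl fun y _ => point i y]
        by_cases hij : i = j <;> simp [hij]
    _ = ∑ y : Fin (k+1) → V, w (y 0) j * G y := by
        rw [Finset.sum_ite_eq' Finset.univ j]
        simp
    _ = ∑ i : V, w i j *
          (if i = v then pT w (W.erase j) D v k else vT w (W.erase j) D i v k) := by
        have key : ∀ i : V, w i j *
              (if i = v then pT w (W.erase j) D v k else vT w (W.erase j) D i v k)
            = ∑ y : Fin (k+1) → V, (if y 0 = i then w (y 0) j * G y else 0) := by
          intro i
          by_cases hiv : i = v
          · rw [hiv, if_pos rfl]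
            rw [show pT w (W.erase j) D v k = ∑ y : Fin (k+1) → V,
                (if y 0 = v ∧ Function.Injective y ∧
                    (∀ m : Fin (k+1), (m : ℕ) < k → y m ∈ W.erase j \ D) ∧
                    y (Fin.last k) ∈ D
                  then ∏ l : Fin k, w (y l.succ) (y l.castSucc) else 0) from rfl]
            rw [Finset.mul_sum]
            refine Finset.sum_congr rfl fun y _ => ?_
            by_cases h0 : y 0 = v
            · have hex : (Function.Injective y ∧
                  (∀ m : Fin (k+1), (m : ℕ) < k → y m ∈ W.erase j \ D) ∧
                  y (Fin.last k) ∈ D ∧ (∃ m : Fin (k+1), (m : ℕ) < k ∧ y m = v))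
                ↔ (Function.Injective y ∧
                  (∀ m : Fin (k+1), (m : ℕ) < k → y m ∈ W.erase j \ D) ∧
                  y (Fin.last k) ∈ D) := by
                constructor
                · rintro ⟨a, b, c, -⟩; exact ⟨a, b, c⟩
                · rintro ⟨a, b, c⟩
                  refine ⟨a, b, c, ?_⟩
                  cases k with
                  | zero =>
                    exact absurd (h0 ▸ c) hvD
                  | succ k' => exact ⟨0, Nat.succ_pos k', h0⟩
              simp only [hG, hex, h0, eq_self_iff_true, true_and, if_true]
            · simp [h0]
          · rw [if_neg hiv]
            rw [show vT w (W.erase j) D i v k = ∑ y : Fin (k+1) → V,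
                (if y 0 = i ∧ Function.Injective y ∧
                    (∀ m : Fin (k+1), (m : ℕ) < k → y m ∈ W.erase j \ D) ∧
                    y (Fin.last k) ∈ D ∧ (∃ m : Fin (k+1), (m : ℕ) < k ∧ y m = v)
                  then ∏ l : Fin k, w (y l.succ) (y l.castSucc) else 0) from rfl]
            rw [Finset.mul_sum]
            refine Finset.sum_congr rfl fun y _ => ?_
            by_cases h0 : y 0 = i
            · simp [hG, h0]
            · simp [h0]
        rw [Finset.sum_congr rfl fun i _ => key i, Finset.sum_comm]
        refine Finset.sum_congr rfl fun y _ => ?_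
        rw [Finset.sum_ite_eq Finset.univ (y 0)]
        simp

lemma cP_succ (hjW : j ∈ W) (hjD : j ∉ D) (n : ℕ) :
    cP w W D j (n + 1) = ∑ i : V, w i j * cP w (W.erase j) D i n := by
  rw [cP, Finset.sum_range_succ']
  rw [pT_zero, if_neg hjD, add_zero]
  rw [Finset.sum_congr rfl fun k _ => pT_succ hjW hjD k, Finset.sum_comm]
  simp [cP, Finset.mul_sum]

lemma cV_succ (hjW : j ∈ W) (hjD : j ∉ D) (hvD : v ∉ D) (hjv : j ≠ v) (n : ℕ) :
    cV w W D j v (n + 1) = ∑ i : V, w i j *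
      (if i = v then cP w (W.erase j) D v n else cV w (W.erase j) D i v n) := by
  rw [cV, Finset.sum_range_succ']
  rw [vT_zero, add_zero]
  rw [Finset.sum_congr rfl fun k _ => vT_succ hjW hjD hvD hjv k, Finset.sum_comm]
  refine Finset.sum_congr rfl fun i _ => ?_
  rw [← Finset.mul_sum]
  congr 1
  split <;> simp [cP, cV]

lemma cP_le_one (hw0 : ∀ i j : V, 0 ≤ w i j)
    (hw1 : ∀ j : V, ∑ i ∈ Finset.univ.erase j, w i j ≤ 1) :
    ∀ (n : ℕ) (W : Finset V) (j : V), cP w W D j n ≤ 1 := by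
  intro n
  induction n with
  | zero => intro W j; simp [cP]
  | succ n ih =>
    intro W j
    by_cases hjD : j ∈ D
    · rw [cP_mem_D hjD]; split <;> norm_num
    by_cases hjW : j ∈ W
    · rw [cP_succ hjW hjD]
      have hjz : cP w (W.erase j) D j n = 0 :=
        cP_eq_zero (Finset.notMem_erase j W) hjD n
      calc ∑ i : V, w i j * cP w (W.erase j) D i n
          = ∑ i ∈ Finset.univ.erase j, w i j * cP w (W.erase j) D i n := by
            rw [Finset.sum_erase_eq_sub (Finset.mem_univ j), hjz, mul_zero, sub_zero]
        _ ≤ ∑ i ∈ Finset.univ.erase j, w i j := by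
            refine Finset.sum_le_sum fun i _ => ?_
            calc w i j * cP w (W.erase j) D i n ≤ w i j * 1 :=
              mul_le_mul_of_nonneg_left (ih _ _) (hw0 i j)
            _ = w i j := mul_one _
        _ ≤ 1 := hw1 j
    · rw [cP_eq_zero hjW hjD]; norm_num

lemma main_ineq (hw0 : ∀ i j : V, 0 ≤ w i j)
    (hw1 : ∀ j : V, ∑ i ∈ Finset.univ.erase j, w i j ≤ 1)
    (A : Finset V) (v : V) (hv : v ∉ A) :
    ∀ (n : ℕ) (W : Finset V) (j : V), j ∉ A → j ≠ v →
      cV w W A j v n ≤ cP w (W \ A) {v} j n := by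
  intro n
  induction n with
  | zero => intro W j _ _; simp [cP, cV]
  | succ n ih =>
    intro W j hjA hjv
    by_cases hjW : j ∈ W
    case neg =>
      rw [cV_eq_zero (by simp [hjW]) (n+1)]
      exact cP_nonneg hw0 (n+1)
    rw [cV_succ hjW hjA hv hjv, cP_succ (by simp [hjW, hjA]) (by simp [hjv])]
    rw [show (W \ A).erase j = (W.erase j) \ A from (Finset.erase_sdiff_comm W A j).symm]
    refine Finset.sum_le_sum fun i _ => ?_
    refine mul_le_mul_of_nonneg_left ?_ (hw0 i j)
    by_cases hiv : i = v
    · rw [if_pos hiv, hiv, cP_mem_D (Finset.mem_singleton_self v)]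
      split
      · subst ‹n = 0›; simp [cP]
      · exact cP_le_one hw0 hw1 n (W.erase j) v
    · rw [if_neg hiv]
      by_cases hiA : i ∈ A
      · rw [cV_eq_zero (by simp [hiA]) n]
        exact cP_nonneg hw0 n
      · exact ih (W.erase j) i hiA hiv

end Aux

theorem stmt7 {V : Type*} [Fintype V] [DecidableEq V] (w : V → V → ℝ)
    (hw0 : ∀ i j : V, 0 ≤ w i j)
    (hw1 : ∀ j : V, ∑ i ∈ Finset.univ.erase j, w i j ≤ 1)
    (A : Finset V) (j v : V) (hj : j ∉ A) (hv : v ∉ A) (hjv : j ≠ v) :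
    cPathVia w Finset.univ A j v ≤ cPath w (Finset.univ \ A) {v} j := by
  rw [cPathVia_eq_cV, cPath_eq_cP]
  exact main_ineq hw0 hw1 A v hv (Fintype.card V) Finset.univ j hj hjv
end

section
/- The acyclic path probability c(j → A) is monotonically increasing in the target set: for all sets A ⊆ B ⊆ V and every node j ∈ V, c(j → A) ≤ c(j → B). -/
open Finset

namespace Stmt9Aux

variable {V : Type*} [Fintype V] [DecidableEq V]

/-- The summand of `cPath` at a fixed path length. -/
noncomputable def pS (w : V → V → ℝ) (W D : Finset V) (j : V) (k : ℕ) : ℝ := by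
  classical
  exact ∑ x : Fin (k + 1) → V,
    if x 0 = j ∧ Function.Injective x ∧
        (∀ m : Fin (k + 1), (m : ℕ) < k → x m ∈ W \ D) ∧ x (Fin.last k) ∈ D
    then ∏ i : Fin k, w (x i.succ) (x i.castSucc) else 0

lemma cPath_eq (w : V → V → ℝ) (W D : Finset V) (j : V) :
    cPath w W D j = ∑' k, pS w W D j k := rfl

lemma pS_big (w : V → V → ℝ) (W D : Finset V) (j : V) {k : ℕ}
    (hk : Fintype.card V ≤ k) : pS w W D j k = 0 := by
  classical
  apply Finset.sum_eq_zero
  intro x _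
  rw [if_neg]
  rintro ⟨-, hinj, -⟩
  have := Fintype.card_le_of_injective x hinj
  simp [Fintype.card_fin] at this
  omega

lemma summable_pS (w : V → V → ℝ) (W D : Finset V) (j : V) : Summable (pS w W D j) := by
  apply summable_of_ne_finset_zero (s := Finset.range (Fintype.card V))
  intro k hk
  exact pS_big w W D j (by simpa using hk)

lemma pS_zero (w : V → V → ℝ) (W D : Finset V) (j : V) :
    pS w W D j 0 = if j ∈ D then 1 else 0 := by
  classical
  unfold pS
  rw [Fintype.sum_equiv (Equiv.funUnique (Fin 1) V)
    _ (fun a => if a = j ∧ a ∈ D then 1 else 0) ?_]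
  · simp [ite_and, Finset.sum_ite_eq']
  · intro x
    have hi : Function.Injective x := Function.injective_of_subsingleton x
    simp [hi, show Fin.last 0 = 0 from rfl, Equiv.funUnique,
      show (default : Fin 1) = 0 from rfl]

lemma pS_succ_of_mem (w : V → V → ℝ) (W D : Finset V) {j : V} (hjD : j ∈ D) (k : ℕ) :
    pS w W D j (k + 1) = 0 := by
  classical
  apply Finset.sum_eq_zero
  intro x _
  rw [if_neg]
  rintro ⟨h0, -, hint, -⟩
  have := hint 0 (by simp)
  rw [h0] at this
  exact (Finset.mem_sdiff.1 this).2 hjD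

lemma pS_succ_of_not_mem (w : V → V → ℝ) (W D : Finset V) {j : V} (hjW : j ∉ W) (k : ℕ) :
    pS w W D j (k + 1) = 0 := by
  classical
  apply Finset.sum_eq_zero
  intro x _
  rw [if_neg]
  rintro ⟨h0, -, hint, -⟩
  have := hint 0 (by simp)
  rw [h0] at this
  exact hjW (Finset.mem_sdiff.1 this).1

lemma pS_succ (w : V → V → ℝ) (W D : Finset V) {j : V} (hjW : j ∈ W) (hjD : j ∉ D) (k : ℕ) :
    pS w W D j (k + 1) = ∑ i : V, w i j * pS w (W.erase j) D i k := by
  classical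
  unfold pS
  rw [← Equiv.sum_comp (Fin.consEquiv (fun _ : Fin (k + 2) => V)), Fintype.sum_prod_type]
  simp only [Fin.consEquiv_apply]
  rw [Finset.sum_eq_single j ?h1 (by simp)]
  swap
  · intro b _ hb
    apply Finset.sum_eq_zero
    intro y _
    rw [if_neg]
    rintro ⟨h0, -⟩
    rw [Fin.cons_zero] at h0
    exact hb h0
  -- now RHS: push mul inside and swap sums
  simp_rw [Finset.mul_sum]
  rw [Finset.sum_comm]
  apply Finset.sum_congr rfl
  intro y _
  rw [Finset.sum_eq_single (y 0) ?h2 (by simp)]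
  swap
  · intro b _ hb
    rw [if_neg, mul_zero]
    rintro ⟨h0, -⟩
    exact hb h0.symm
  have hlast : (Fin.cons j y : Fin (k+2) → V) (Fin.last (k + 1)) = y (Fin.last k) := by
    rw [← Fin.succ_last, Fin.cons_succ]
  have hcond : ((Fin.cons j y : Fin (k+2) → V) 0 = j ∧
      Function.Injective (Fin.cons j y : Fin (k+2) → V) ∧
      (∀ m : Fin (k + 2), (m : ℕ) < k + 1 → (Fin.cons j y : Fin (k+2) → V) m ∈ W \ D) ∧
      (Fin.cons j y : Fin (k+2) → V) (Fin.last (k + 1)) ∈ D) ↔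
      (y 0 = y 0 ∧ Function.Injective y ∧
      (∀ m : Fin (k + 1), (m : ℕ) < k → y m ∈ W.erase j \ D) ∧ y (Fin.last k) ∈ D) := by
    constructor
    · rintro ⟨-, hinj, hint, hl⟩
      rw [hlast] at hl
      obtain ⟨hrange, hinjy⟩ := Fin.cons_injective_iff.1 hinj
      refine ⟨rfl, hinjy, fun m hm => ?_, hl⟩
      have h1 := hint m.succ (by simp [Fin.val_succ]; omega)
      rw [Fin.cons_succ] at h1
      rw [Finset.mem_sdiff] at h1 ⊢
      exact ⟨Finset.mem_erase.2 ⟨fun h => hrange ⟨m, h⟩, h1.1⟩, h1.2⟩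
    · rintro ⟨-, hinjy, hint, hl⟩
      have hrange : j ∉ Set.range y := by
        rintro ⟨m, hm⟩
        by_cases hmk : (m : ℕ) < k
        · have := hint m hmk
          rw [Finset.mem_sdiff, Finset.mem_erase] at this
          exact this.1.1 hm
        · have hmeq : m = Fin.last k := by
            apply Fin.ext
            have := m.isLt
            simp [Fin.last]
            omega
          rw [hmeq] at hm
          rw [hm] at hl
          exact hjD hl
      refine ⟨Fin.cons_zero _ _, Fin.cons_injective_iff.2 ⟨hrange, hinjy⟩, fun m hm => ?_,
        by rwa [hlast]⟩
      induction m using Fin.cases with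
      | zero => simp [Finset.mem_sdiff, hjW, hjD]
      | succ m' =>
        rw [Fin.cons_succ]
        have hm' : (m' : ℕ) < k := by simpa [Fin.val_succ] using hm
        have := hint m' hm'
        rw [Finset.mem_sdiff, Finset.mem_erase] at this
        exact Finset.mem_sdiff.2 ⟨this.1.2, this.2⟩
  have he : ((Fin.consEquiv fun _ : Fin (k + 1 + 1) => V) (j, y) : Fin (k + 2) → V)
      = Fin.cons j y := rfl
  rw [he, if_congr hcond rfl rfl]
  have hprod : (∏ i : Fin (k + 1),
      w ((Fin.cons j y : Fin (k+2) → V) i.succ) ((Fin.cons j y : Fin (k+2) → V) i.castSucc)) =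
      w (y 0) j * ∏ i : Fin k, w (y i.succ) (y i.castSucc) := by
    rw [Fin.prod_univ_succ]
    simp only [← Fin.succ_castSucc, Fin.cons_succ, Fin.castSucc_zero, Fin.cons_zero]
  by_cases h : (y 0 = y 0 ∧ Function.Injective y ∧
      (∀ m : Fin (k + 1), (m : ℕ) < k → y m ∈ W.erase j \ D) ∧ y (Fin.last k) ∈ D)
  · rw [if_pos h, if_pos h, hprod]
  · rw [if_neg h, if_neg h, mul_zero]

lemma cPath_of_mem (w : V → V → ℝ) (W D : Finset V) {j : V} (hjD : j ∈ D) :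
    cPath w W D j = 1 := by
  rw [cPath_eq, tsum_eq_single 0 ?_]
  · rw [pS_zero, if_pos hjD]
  · intro k hk
    obtain ⟨k', rfl⟩ := Nat.exists_eq_succ_of_ne_zero hk
    exact pS_succ_of_mem w W D hjD k'

lemma cPath_of_not_mem (w : V → V → ℝ) (W D : Finset V) {j : V}
    (hjW : j ∉ W) (hjD : j ∉ D) : cPath w W D j = 0 := by
  rw [cPath_eq]
  have h : ∀ k, pS w W D j k = 0 := by
    intro k
    cases k with
    | zero => rw [pS_zero, if_neg hjD]
    | succ k' => exact pS_succ_of_not_mem w W D hjW k'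
  rw [tsum_congr h, tsum_zero]

lemma cPath_rec (w : V → V → ℝ) (W D : Finset V) {j : V} (hjW : j ∈ W) (hjD : j ∉ D) :
    cPath w W D j = ∑ i : V, w i j * cPath w (W.erase j) D i := by
  rw [cPath_eq, Summable.tsum_eq_zero_add (summable_pS w W D j), pS_zero, if_neg hjD, zero_add]
  rw [tsum_congr (fun k => pS_succ w W D hjW hjD k),
    Summable.tsum_finsetSum (fun i _ => (summable_pS w (W.erase j) D i).mul_left (w i j))]
  refine Finset.sum_congr rfl fun i _ => ?_
  rw [tsum_mul_left, cPath_eq]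

lemma cPath_le_one (w : V → V → ℝ) (hw0 : ∀ i j : V, 0 ≤ w i j)
    (hw1 : ∀ j : V, ∑ i ∈ Finset.univ.erase j, w i j ≤ 1)
    (W D : Finset V) (j : V) : cPath w W D j ≤ 1 := by
  classical
  induction W using Finset.strongInduction generalizing j with
  | _ W ih =>
    by_cases hjD : j ∈ D
    · exact le_of_eq (cPath_of_mem w W D hjD)
    by_cases hjW : j ∈ W
    · rw [cPath_rec w W D hjW hjD]
      have hzero : cPath w (W.erase j) D j = 0 :=
        cPath_of_not_mem w _ D (Finset.notMem_erase j W) hjD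
      calc ∑ i : V, w i j * cPath w (W.erase j) D i
          = ∑ i ∈ Finset.univ.erase j, w i j * cPath w (W.erase j) D i := by
            rw [← Finset.add_sum_erase _ _ (Finset.mem_univ j), hzero, mul_zero, zero_add]
        _ ≤ ∑ i ∈ Finset.univ.erase j, w i j := by
            refine Finset.sum_le_sum fun i _ => ?_
            calc w i j * cPath w (W.erase j) D i ≤ w i j * 1 :=
              mul_le_mul_of_nonneg_left (ih (W.erase j) (Finset.erase_ssubset hjW) i) (hw0 i j)
            _ = w i j := mul_one _
        _ ≤ 1 := hw1 j
    · rw [cPath_of_not_mem w W D hjW hjD]; norm_num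

lemma cPath_mono (w : V → V → ℝ) (hw0 : ∀ i j : V, 0 ≤ w i j)
    (hw1 : ∀ j : V, ∑ i ∈ Finset.univ.erase j, w i j ≤ 1)
    (A B : Finset V) (hAB : A ⊆ B) (W : Finset V) (j : V) :
    cPath w W A j ≤ cPath w W B j := by
  classical
  induction W using Finset.strongInduction generalizing j with
  | _ W ih =>
    by_cases hjA : j ∈ A
    · rw [cPath_of_mem w W A hjA, cPath_of_mem w W B (hAB hjA)]
    by_cases hjB : j ∈ B
    · rw [cPath_of_mem w W B hjB]
      exact cPath_le_one w hw0 hw1 W A j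
    by_cases hjW : j ∈ W
    · rw [cPath_rec w W A hjW hjA, cPath_rec w W B hjW hjB]
      exact Finset.sum_le_sum fun i _ =>
        mul_le_mul_of_nonneg_left (ih (W.erase j) (Finset.erase_ssubset hjW) i) (hw0 i j)
    · rw [cPath_of_not_mem w W A hjW hjA, cPath_of_not_mem w W B hjW hjB]

end Stmt9Aux

theorem stmt9 {V : Type*} [Fintype V] [DecidableEq V] (w : V → V → ℝ)
    (hw0 : ∀ i j : V, 0 ≤ w i j)
    (hw1 : ∀ j : V, ∑ i ∈ Finset.univ.erase j, w i j ≤ 1)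
    (A B : Finset V) (hAB : A ⊆ B) (j : V) :
    cPath w Finset.univ A j ≤ cPath w Finset.univ B j :=
  Stmt9Aux.cPath_mono w hw0 hw1 A B hAB Finset.univ j
end

section
/- The acyclic path probability c(j → A) is submodular in the target set: for all sets A ⊆ B ⊆ V, every node v ∈ V \ B and every node j ∈ V, c(j → A ∪ {v}) − c(j → A) ≥ c(j → B ∪ {v}) − c(j → B). -/
open Finset

/-! ### Auxiliary lemmas -/

noncomputable def pathSum {V : Type*} [Fintype V] [DecidableEq V]
    (w : V → V → ℝ) (W D : Finset V) (j : V) (k : ℕ) : ℝ := by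
  classical
  exact ∑ x : Fin (k + 1) → V,
    if x 0 = j ∧ Function.Injective x ∧
        (∀ m : Fin (k + 1), (m : ℕ) < k → x m ∈ W \ D) ∧ x (Fin.last k) ∈ D
    then ∏ i : Fin k, w (x i.succ) (x i.castSucc) else 0

section Aux

variable {V : Type*} [Fintype V] [DecidableEq V] (w : V → V → ℝ)

lemma cPath_eq_tsum (W D : Finset V) (j : V) :
    cPath w W D j = ∑' k : ℕ, pathSum w W D j k := rfl

lemma pathSum_nonneg (hw0 : ∀ i j : V, 0 ≤ w i j) (W D : Finset V) (j : V) (k : ℕ) :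
    0 ≤ pathSum w W D j k := by
  unfold pathSum
  apply Finset.sum_nonneg
  intro x _
  split
  · exact Finset.prod_nonneg fun i _ => hw0 _ _
  · exact le_refl _

lemma pathSum_eq_zero_of_le (W D : Finset V) (j : V) (k : ℕ) (h : Fintype.card V ≤ k) :
    pathSum w W D j k = 0 := by
  unfold pathSum
  apply Finset.sum_eq_zero
  intro x _
  rw [if_neg]
  rintro ⟨-, hinj, -, -⟩
  have := Fintype.card_le_of_injective x hinj
  simp [Fintype.card_fin] at this
  omega

lemma pathSum_zero_eq_one (W D : Finset V) (j : V) (hj : j ∈ D) :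
    pathSum w W D j 0 = 1 := by
  unfold pathSum
  rw [Fintype.sum_equiv (Equiv.funUnique (Fin 1) V) _
    (fun a : V => if a = j then 1 else 0)]
  · simp
  · intro x
    have hx : x = fun _ : Fin 1 => x 0 := funext fun m => by
      rw [Subsingleton.elim m 0]
    have hinj : Function.Injective x := fun a b _ => Subsingleton.elim a b
    have hl : Fin.last 0 = 0 := rfl
    by_cases h : x 0 = j <;>
      simp [Equiv.funUnique, h, hinj, hl, hj]

lemma pathSum_zero_eq_zero (W D : Finset V) (j : V) (hj : j ∉ D) :
    pathSum w W D j 0 = 0 := by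
  unfold pathSum
  apply Finset.sum_eq_zero
  intro x _
  rw [if_neg]
  rintro ⟨h0, -, -, hl⟩
  exact hj (by rwa [show Fin.last 0 = 0 from rfl, h0] at hl)

lemma pathSum_succ_eq_zero (W D : Finset V) (j : V) (hj : j ∉ W \ D) (k : ℕ) :
    pathSum w W D j (k + 1) = 0 := by
  unfold pathSum
  apply Finset.sum_eq_zero
  intro x _
  rw [if_neg]
  rintro ⟨h0, -, hm, -⟩
  exact hj (h0 ▸ hm 0 (by simp))

lemma cPath_eq_sum_s10 (W D : Finset V) (j : V) (M : ℕ) (hM : Fintype.card V ≤ M) :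
    cPath w W D j = ∑ k ∈ Finset.range M, pathSum w W D j k := by
  rw [cPath_eq_tsum]
  apply tsum_eq_sum
  intro k hk
  have : M ≤ k := Nat.le_of_not_lt (fun h => hk (Finset.mem_range.mpr h))
  exact pathSum_eq_zero_of_le w W D j k (le_trans hM this)

lemma cPath_of_mem (W D : Finset V) (j : V) (hj : j ∈ D) : cPath w W D j = 1 := by
  have h1 : 0 < Fintype.card V := Fintype.card_pos_iff.mpr ⟨j⟩
  rw [cPath_eq_sum_s10 w W D j (Fintype.card V) le_rfl]
  rw [Finset.sum_eq_single_of_mem 0 (Finset.mem_range.mpr h1)]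
  · exact pathSum_zero_eq_one w W D j hj
  · intro k _ hk
    obtain ⟨m, rfl⟩ := Nat.exists_eq_succ_of_ne_zero hk
    exact pathSum_succ_eq_zero w W D j (by simp [hj]) m

lemma cPath_of_not_mem (W D : Finset V) (j : V) (hjW : j ∉ W) (hjD : j ∉ D) :
    cPath w W D j = 0 := by
  rw [cPath_eq_sum_s10 w W D j (Fintype.card V) le_rfl]
  apply Finset.sum_eq_zero
  intro k _
  cases k with
  | zero => exact pathSum_zero_eq_zero w W D j hjD
  | succ m => exact pathSum_succ_eq_zero w W D j (by simp [hjW]) m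

lemma cPath_nonneg (hw0 : ∀ i j : V, 0 ≤ w i j) (W D : Finset V) (j : V) :
    0 ≤ cPath w W D j := by
  rw [cPath_eq_tsum]
  exact tsum_nonneg fun k => pathSum_nonneg w hw0 W D j k

lemma pathSum_succ (W D : Finset V) (j : V) (hjW : j ∈ W) (hjD : j ∉ D) (k : ℕ) :
    pathSum w W D j (k + 1) = ∑ i : V, w i j * pathSum w (W.erase j) D i k := by
  classical
  unfold pathSum
  rw [← Equiv.sum_comp (Fin.consEquiv fun _ : Fin (k + 2) => V)]
  rw [Fintype.sum_prod_type]
  rw [Finset.sum_eq_single_of_mem j (Finset.mem_univ j)]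
  · -- main case: a = j
    have hrhs : ∀ i : V, w i j * (∑ y : Fin (k+1) → V,
        if y 0 = i ∧ Function.Injective y ∧
          (∀ m : Fin (k + 1), (m : ℕ) < k → y m ∈ (W.erase j) \ D) ∧ y (Fin.last k) ∈ D
        then ∏ l : Fin k, w (y l.succ) (y l.castSucc) else 0)
        = ∑ y : Fin (k+1) → V,
        if y 0 = i then (if Function.Injective y ∧
          (∀ m : Fin (k + 1), (m : ℕ) < k → y m ∈ (W.erase j) \ D) ∧ y (Fin.last k) ∈ D
        then w i j * ∏ l : Fin k, w (y l.succ) (y l.castSucc) else 0) else 0 := by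
      intro i
      rw [Finset.mul_sum]
      apply Finset.sum_congr rfl
      intro y _
      rw [ite_and]
      split
      · split <;> simp
      · simp
    simp only [hrhs]
    rw [Finset.sum_comm]
    apply Finset.sum_congr rfl
    intro y _
    have hfun : (Fin.consEquiv fun _ : Fin (k + 2) => V) (j, y) =
        Fin.cons (α := fun _ : Fin (k + 2) => V) j y := rfl
    rw [Finset.sum_ite_eq univ (y 0) (fun i => if Function.Injective y ∧
          (∀ m : Fin (k + 1), (m : ℕ) < k → y m ∈ (W.erase j) \ D) ∧ y (Fin.last k) ∈ D
        then w i j * ∏ l : Fin k, w (y l.succ) (y l.castSucc) else 0)]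
    rw [if_pos (Finset.mem_univ _)]
    have hval : (∏ i : Fin (k+1), w ((Fin.consEquiv fun _ : Fin (k + 2) => V) (j, y) i.succ)
        (((Fin.consEquiv fun _ : Fin (k + 2) => V) (j, y)) i.castSucc))
        = w (y 0) j * ∏ l : Fin k, w (y l.succ) (y l.castSucc) := by
      rw [hfun, Fin.prod_univ_succ]
      simp only [Fin.cons_succ, Fin.castSucc_zero, Fin.cons_zero, ← Fin.succ_castSucc]
    have hcond : ((Fin.consEquiv fun _ : Fin (k + 2) => V) (j, y) 0 = j ∧
        Function.Injective ((Fin.consEquiv fun _ : Fin (k + 2) => V) (j, y)) ∧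
        (∀ m : Fin (k + 2), (m : ℕ) < k + 1 →
          (Fin.consEquiv fun _ : Fin (k + 2) => V) (j, y) m ∈ W \ D) ∧
        (Fin.consEquiv fun _ : Fin (k + 2) => V) (j, y) (Fin.last (k + 1)) ∈ D)
        ↔ (Function.Injective y ∧
          (∀ m : Fin (k + 1), (m : ℕ) < k → y m ∈ (W.erase j) \ D) ∧ y (Fin.last k) ∈ D) := by
      rw [hfun]
      have hlast : Fin.cons (α := fun _ : Fin (k+2) => V) j y (Fin.last (k + 1)) = y (Fin.last k) := by
        rw [← Fin.succ_last, Fin.cons_succ]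
      constructor
      · rintro ⟨-, hinj, hm, hl⟩
        refine ⟨?_, ?_, ?_⟩
        · intro a b hab
          have : Fin.cons (α := fun _ : Fin (k+2) => V) j y a.succ =
              Fin.cons (α := fun _ : Fin (k+2) => V) j y b.succ := by
            rwa [Fin.cons_succ, Fin.cons_succ]
          exact Fin.succ_injective _ (hinj this)
        · intro m hmk
          have h1 : Fin.cons (α := fun _ : Fin (k+2) => V) j y m.succ ∈ W \ D := by
            apply hm m.succ
            simp [Fin.val_succ]
            omega
          rw [Fin.cons_succ] at h1
          rw [Finset.mem_sdiff] at h1 ⊢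
          refine ⟨Finset.mem_erase.mpr ⟨?_, h1.1⟩, h1.2⟩
          intro hyj
          have : Fin.cons (α := fun _ : Fin (k+2) => V) j y m.succ =
              Fin.cons (α := fun _ : Fin (k+2) => V) j y 0 := by
            rw [Fin.cons_succ, Fin.cons_zero, hyj]
          exact Fin.succ_ne_zero m (hinj this)
        · rwa [hlast] at hl
      · rintro ⟨hinj, hm, hl⟩
        have hrange : ∀ i : Fin (k + 1), y i ≠ j := by
          intro i hij
          by_cases hik : (i : ℕ) < k
          · have := hm i hik
            rw [Finset.mem_sdiff, Finset.mem_erase] at this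
            exact this.1.1 hij
          · have : i = Fin.last k := by
              apply Fin.ext
              simp only [Fin.val_last]
              omega
            rw [this] at hij
            rw [hij] at hl
            exact hjD hl
        refine ⟨Fin.cons_zero _ _, ?_, ?_, ?_⟩
        · intro a b hab
          rcases Fin.eq_zero_or_eq_succ a with rfl | ⟨a', rfl⟩ <;>
            rcases Fin.eq_zero_or_eq_succ b with rfl | ⟨b', rfl⟩
          · rfl
          · rw [Fin.cons_zero, Fin.cons_succ] at hab
            exact absurd hab.symm (hrange b')
          · rw [Fin.cons_zero, Fin.cons_succ] at hab
            exact absurd hab (hrange a')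
          · rw [Fin.cons_succ, Fin.cons_succ] at hab
            rw [hinj hab]
        · intro m hmk
          rcases Fin.eq_zero_or_eq_succ m with rfl | ⟨m', rfl⟩
          · rw [Fin.cons_zero]
            exact Finset.mem_sdiff.mpr ⟨hjW, hjD⟩
          · rw [Fin.cons_succ]
            have hmk' : (m' : ℕ) < k := by
              simp [Fin.val_succ] at hmk
              omega
            have := hm m' hmk'
            rw [Finset.mem_sdiff, Finset.mem_erase] at this
            exact Finset.mem_sdiff.mpr ⟨this.1.2, this.2⟩
        · rwa [hlast]
    rw [hval]
    exact if_congr hcond rfl rfl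
  · -- other a ≠ j give 0
    intro a _ haj
    apply Finset.sum_eq_zero
    intro y _
    rw [if_neg]
    rintro ⟨h0, -⟩
    simp only [Fin.consEquiv_apply, Fin.cons_zero] at h0
    exact haj h0

lemma cPath_rec (W D : Finset V) (j : V) (hjW : j ∈ W) (hjD : j ∉ D) :
    cPath w W D j = ∑ i : V, w i j * cPath w (W.erase j) D i := by
  rw [cPath_eq_sum_s10 w W D j (Fintype.card V + 1) (Nat.le_succ _)]
  rw [Finset.sum_range_succ']
  rw [pathSum_zero_eq_zero w W D j hjD, add_zero]
  rw [Finset.sum_congr rfl (fun k _ => pathSum_succ w W D j hjW hjD k)]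
  rw [Finset.sum_comm]
  apply Finset.sum_congr rfl
  intro i _
  rw [← Finset.mul_sum, cPath_eq_sum_s10 w (W.erase j) D i (Fintype.card V) le_rfl]

lemma cPath_le_one (hw0 : ∀ i j : V, 0 ≤ w i j)
    (hw1 : ∀ j : V, ∑ i ∈ Finset.univ.erase j, w i j ≤ 1) :
    ∀ W D : Finset V, ∀ j : V, cPath w W D j ≤ 1 := by
  intro W
  induction W using Finset.strongInduction with
  | _ W ih =>
  intro D j
  by_cases hjD : j ∈ D
  · rw [cPath_of_mem w W D j hjD]
  · by_cases hjW : j ∈ W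
    · rw [cPath_rec w W D j hjW hjD]
      have hj0 : w j j * cPath w (W.erase j) D j = 0 := by
        rw [cPath_of_not_mem w (W.erase j) D j (Finset.notMem_erase j W) hjD, mul_zero]
      rw [← Finset.sum_erase (f := fun i => w i j * cPath w (W.erase j) D i) Finset.univ hj0]
      calc ∑ i ∈ Finset.univ.erase j, w i j * cPath w (W.erase j) D i
          ≤ ∑ i ∈ Finset.univ.erase j, w i j := by
            apply Finset.sum_le_sum
            intro i _
            have h1 := ih (W.erase j) (Finset.erase_ssubset hjW) D i
            calc w i j * cPath w (W.erase j) D i ≤ w i j * 1 :=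
                  mul_le_mul_of_nonneg_left h1 (hw0 i j)
              _ = w i j := mul_one _
        _ ≤ 1 := hw1 j
    · rw [cPath_of_not_mem w W D j hjW hjD]
      norm_num

lemma cPath_mono_D (hw0 : ∀ i j : V, 0 ≤ w i j)
    (hw1 : ∀ j : V, ∑ i ∈ Finset.univ.erase j, w i j ≤ 1) :
    ∀ W D D' : Finset V, D ⊆ D' → ∀ j : V, cPath w W D j ≤ cPath w W D' j := by
  intro W
  induction W using Finset.strongInduction with
  | _ W ih =>
  intro D D' hDD' j
  by_cases hjD : j ∈ D
  · rw [cPath_of_mem w W D j hjD, cPath_of_mem w W D' j (hDD' hjD)]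
  · by_cases hjD' : j ∈ D'
    · rw [cPath_of_mem w W D' j hjD']
      exact cPath_le_one w hw0 hw1 W D j
    · by_cases hjW : j ∈ W
      · rw [cPath_rec w W D j hjW hjD, cPath_rec w W D' j hjW hjD']
        apply Finset.sum_le_sum
        intro i _
        exact mul_le_mul_of_nonneg_left
          (ih (W.erase j) (Finset.erase_ssubset hjW) D D' hDD' i) (hw0 i j)
      · rw [cPath_of_not_mem w W D j hjW hjD]
        exact cPath_nonneg w hw0 W D' j

end Aux

theorem stmt10 {V : Type*} [Fintype V] [DecidableEq V] (w : V → V → ℝ)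
    (hw0 : ∀ i j : V, 0 ≤ w i j)
    (hw1 : ∀ j : V, ∑ i ∈ Finset.univ.erase j, w i j ≤ 1)
    (A B : Finset V) (hAB : A ⊆ B) (v : V) (hv : v ∉ B) (j : V) :
    cPath w Finset.univ (insert v B) j - cPath w Finset.univ B j
      ≤ cPath w Finset.univ (insert v A) j - cPath w Finset.univ A j := by
  have main : ∀ W A B : Finset V, A ⊆ B → v ∉ B → ∀ j : V,
      cPath w W (insert v B) j - cPath w W B j
        ≤ cPath w W (insert v A) j - cPath w W A j := by
    intro W
    induction W using Finset.strongInduction with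
    | _ W ih =>
    intro A B hAB hv j
    by_cases hjv : j = v
    · subst hjv
      rw [cPath_of_mem w W (insert j B) j (Finset.mem_insert_self j B),
        cPath_of_mem w W (insert j A) j (Finset.mem_insert_self j A)]
      have := cPath_mono_D w hw0 hw1 W A B hAB j
      linarith
    · by_cases hjB : j ∈ B
      · rw [cPath_of_mem w W B j hjB,
          cPath_of_mem w W (insert v B) j (Finset.mem_insert_of_mem hjB)]
        have := cPath_mono_D w hw0 hw1 W A (insert v A) (Finset.subset_insert v A) j
        linarith
      · have hjA : j ∉ A := fun h => hjB (hAB h)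
        have hjvB : j ∉ insert v B := by simp [hjv, hjB]
        have hjvA : j ∉ insert v A := by simp [hjv, hjA]
        by_cases hjW : j ∈ W
        · rw [cPath_rec w W (insert v B) j hjW hjvB, cPath_rec w W B j hjW hjB,
            cPath_rec w W (insert v A) j hjW hjvA, cPath_rec w W A j hjW hjA,
            ← Finset.sum_sub_distrib, ← Finset.sum_sub_distrib]
          apply Finset.sum_le_sum
          intro i _
          rw [← mul_sub, ← mul_sub]
          exact mul_le_mul_of_nonneg_left
            (ih (W.erase j) (Finset.erase_ssubset hjW) A B hAB hv i) (hw0 i j)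
        · rw [cPath_of_not_mem w W (insert v B) j hjW hjvB,
            cPath_of_not_mem w W B j hjW hjB,
            cPath_of_not_mem w W (insert v A) j hjW hjvA,
            cPath_of_not_mem w W A j hjW hjA]
  exact main Finset.univ A B hAB hv j
end

section
/- The expected influence σ^(V,A) is submodular in the initial set: for all sets A ⊆ B ⊆ V and every node v ∈ V \ B, σ^(V, A ∪ {v}) − σ^(V,A) ≥ σ^(V, B ∪ {v}) − σ^(V,B). -/
open Finset

section Aux

variable {V : Type*} [Fintype V] [DecidableEq V]

/-- Finite path sum: injective paths of length exactly `k` from `j`,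
interior avoiding `D`, all nodes avoiding `U`, ending in `D`. -/
noncomputable def pSum (w : V → V → ℝ) (k : ℕ) (U D : Finset V) (j : V) : ℝ := by
  classical
  exact ∑ x : Fin (k + 1) → V,
    if x 0 = j ∧ Function.Injective x ∧
        (∀ m : Fin (k + 1), (m : ℕ) < k → x m ∉ D) ∧ x (Fin.last k) ∈ D ∧
        (∀ m : Fin (k + 1), x m ∉ U)
    then ∏ i : Fin k, w (x i.succ) (x i.castSucc) else 0

/-- Recursive truncated hitting "probability". -/
noncomputable def gRec (w : V → V → ℝ) : ℕ → Finset V → Finset V → V → ℝ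
  | 0, U, D, j => if j ∈ D ∧ j ∉ U then 1 else 0
  | n + 1, U, D, j =>
      if j ∈ U then 0
      else if j ∈ D then 1
      else ∑ i : V, w i j * gRec w n (insert j U) D i

lemma pSum_zero (w : V → V → ℝ) (U D : Finset V) (j : V) :
    pSum w 0 U D j = if j ∈ D ∧ j ∉ U then 1 else 0 := by
  classical
  unfold pSum
  rw [Finset.sum_eq_single_of_mem (fun _ : Fin 1 => j) (Finset.mem_univ _)]
  · have hinj : Function.Injective (fun _ : Fin 1 => j) := fun a b _ => Subsingleton.elim a b
    simp [hinj]
  · intro x _ hx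
    rw [if_neg]
    rintro ⟨h0, -, -, -, -⟩
    exact hx (funext fun m => by rw [Subsingleton.elim m 0, h0])

lemma pSum_succ (w : V → V → ℝ) (k : ℕ) (U D : Finset V) (j : V) :
    pSum w (k + 1) U D j =
      if j ∈ U ∨ j ∈ D then 0
      else ∑ i : V, w i j * pSum w k (insert j U) D i := by
  classical
  have key : pSum w (k + 1) U D j = ∑ y : Fin (k + 1) → V,
      if (j ∉ U ∧ j ∉ D) ∧ Function.Injective y ∧
          (∀ m : Fin (k + 1), (m : ℕ) < k → y m ∉ D) ∧ y (Fin.last k) ∈ D ∧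
          (∀ m : Fin (k + 1), y m ∉ insert j U)
      then w (y 0) j * ∏ i : Fin k, w (y i.succ) (y i.castSucc) else 0 := by
    unfold pSum
    rw [← (Fin.consEquiv (fun _ : Fin (k + 2) => V)).sum_comp, Fintype.sum_prod_type,
        Finset.sum_comm]
    simp only [show ∀ (a : V) (y : Fin (k + 1) → V),
        ((Fin.consEquiv fun _ : Fin (k + 2) => V) (a, y) : Fin (k + 2) → V) = Fin.cons a y
      from fun a y => rfl]
    refine Finset.sum_congr rfl fun y _ => ?_
    rw [Finset.sum_eq_single_of_mem j (Finset.mem_univ _)]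
    · refine if_congr ?_ ?_ rfl
      · simp only [Fin.cons_zero, Fin.cons_injective_iff, Set.mem_range, not_exists,
          Fin.forall_fin_succ, Fin.cons_succ, Fin.val_zero, Fin.val_succ,
          ← Fin.succ_last, Finset.mem_insert, not_or, forall_and,
          Nat.succ_lt_succ_iff, Nat.zero_lt_succ, true_implies, true_and]
        tauto
      · simp [Fin.prod_univ_succ, Fin.cons_succ, Fin.cons_zero, ← Fin.succ_castSucc]
    · intro b _ hbj
      rw [if_neg]
      rintro ⟨h0, -⟩
      exact hbj (by simpa using h0)
  by_cases hj : j ∈ U ∨ j ∈ D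
  · rw [key, if_pos hj]
    apply Finset.sum_eq_zero
    intro y _
    rw [if_neg]
    rintro ⟨⟨h1, h2⟩, -⟩
    tauto
  · rw [key, if_neg hj]
    push_neg at hj
    have rhs : (∑ i : V, w i j * pSum w k (insert j U) D i)
        = ∑ y : Fin (k + 1) → V,
          if Function.Injective y ∧ (∀ m : Fin (k + 1), (m : ℕ) < k → y m ∉ D) ∧
              y (Fin.last k) ∈ D ∧ (∀ m : Fin (k + 1), y m ∉ insert j U)
          then w (y 0) j * ∏ i : Fin k, w (y i.succ) (y i.castSucc) else 0 := by
      unfold pSum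
      simp only [Finset.mul_sum, mul_ite, mul_zero]
      rw [Finset.sum_comm]
      refine Finset.sum_congr rfl fun y _ => ?_
      rw [Finset.sum_eq_single_of_mem (y 0) (Finset.mem_univ _)]
      · simp
      · intro b _ hb
        rw [if_neg]
        rintro ⟨h0, -⟩
        exact hb h0.symm
    rw [rhs]
    refine Finset.sum_congr rfl fun y _ => ?_
    refine if_congr ?_ rfl rfl
    simp [hj.1, hj.2]

end Aux

section Aux2

variable {V : Type*} [Fintype V] [DecidableEq V]

lemma gRec_eq_pSum (w : V → V → ℝ) (D : Finset V) :
    ∀ (n : ℕ) (U : Finset V) (j : V),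
      gRec w n U D j = ∑ k ∈ Finset.range (n + 1), pSum w k U D j := by
  intro n
  induction n with
  | zero => intro U j; simp [gRec, pSum_zero]
  | succ n ih =>
    intro U j
    rw [Finset.sum_range_succ']
    simp only [pSum_succ, pSum_zero]
    by_cases hU : j ∈ U
    · simp [gRec, hU]
    · by_cases hD : j ∈ D
      · simp [gRec, hU, hD]
      · have hor : ¬(j ∈ U ∨ j ∈ D) := by tauto
        have h0 : ¬(j ∈ D ∧ j ∉ U) := by tauto
        simp only [if_neg hor, if_neg h0, add_zero]
        rw [Finset.sum_comm]
        show (if j ∈ U then (0:ℝ) else if j ∈ D then 1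
            else ∑ i : V, w i j * gRec w n (insert j U) D i) = _
        rw [if_neg hU, if_neg hD]
        refine Finset.sum_congr rfl fun i _ => ?_
        rw [← Finset.mul_sum, ih]

lemma gRec_zero_of_mem (w : V → V → ℝ) {n : ℕ} {U D : Finset V} {j : V} (hU : j ∈ U) :
    gRec w n U D j = 0 := by
  cases n <;> simp [gRec, hU]

lemma gRec_one_of_mem (w : V → V → ℝ) {n : ℕ} {U D : Finset V} {j : V}
    (hD : j ∈ D) (hU : j ∉ U) : gRec w n U D j = 1 := by
  cases n <;> simp [gRec, hD, hU]

lemma gRec_nonneg (w : V → V → ℝ) (hw0 : ∀ i j : V, 0 ≤ w i j) :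
    ∀ (n : ℕ) (U D : Finset V) (j : V), 0 ≤ gRec w n U D j := by
  intro n
  induction n with
  | zero => intro U D j; unfold gRec; split <;> norm_num
  | succ n ih =>
    intro U D j
    unfold gRec
    split_ifs <;> try norm_num
    exact Finset.sum_nonneg fun i _ => mul_nonneg (hw0 i j) (ih _ _ _)

lemma gRec_le_one (w : V → V → ℝ) (hw0 : ∀ i j : V, 0 ≤ w i j)
    (hw1 : ∀ j : V, ∑ i ∈ Finset.univ.erase j, w i j ≤ 1) :
    ∀ (n : ℕ) (U D : Finset V) (j : V), gRec w n U D j ≤ 1 := by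
  intro n
  induction n with
  | zero => intro U D j; unfold gRec; split <;> norm_num
  | succ n ih =>
    intro U D j
    unfold gRec
    split_ifs
    · norm_num
    · exact le_refl 1
    · calc ∑ i : V, w i j * gRec w n (insert j U) D i
          = ∑ i ∈ Finset.univ.erase j, w i j * gRec w n (insert j U) D i := by
            rw [← Finset.add_sum_erase _ _ (Finset.mem_univ j),
              gRec_zero_of_mem w (Finset.mem_insert_self j U), mul_zero, zero_add]
        _ ≤ ∑ i ∈ Finset.univ.erase j, w i j := by
            refine Finset.sum_le_sum fun i _ => ?_
            calc w i j * gRec w n (insert j U) D i ≤ w i j * 1 :=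
                mul_le_mul_of_nonneg_left (ih _ _ _) (hw0 i j)
              _ = w i j := mul_one _
        _ ≤ 1 := hw1 j

lemma gRec_mono (w : V → V → ℝ) (hw0 : ∀ i j : V, 0 ≤ w i j)
    (hw1 : ∀ j : V, ∑ i ∈ Finset.univ.erase j, w i j ≤ 1)
    {D D' : Finset V} (hDD' : D ⊆ D') :
    ∀ (n : ℕ) (U : Finset V) (j : V), gRec w n U D j ≤ gRec w n U D' j := by
  intro n
  induction n with
  | zero =>
    intro U j
    unfold gRec
    split_ifs with h1 h2 <;>
      first
        | exact absurd ⟨hDD' h1.1, h1.2⟩ h2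
        | norm_num
  | succ n ih =>
    intro U j
    by_cases hU : j ∈ U
    · rw [gRec_zero_of_mem w hU, gRec_zero_of_mem w hU]
    · by_cases hD : j ∈ D
      · rw [gRec_one_of_mem w hD hU, gRec_one_of_mem w (hDD' hD) hU]
      · by_cases hD' : j ∈ D'
        · rw [gRec_one_of_mem w hD' hU]
          exact gRec_le_one w hw0 hw1 _ _ _ _
        · show (if j ∈ U then (0:ℝ) else if j ∈ D then 1
              else ∑ i : V, w i j * gRec w n (insert j U) D i) ≤
            (if j ∈ U then (0:ℝ) else if j ∈ D' then 1
              else ∑ i : V, w i j * gRec w n (insert j U) D' i)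
          rw [if_neg hU, if_neg hD, if_neg hU, if_neg hD']
          exact Finset.sum_le_sum fun i _ =>
            mul_le_mul_of_nonneg_left (ih _ _) (hw0 i j)

end Aux2

section Aux3

variable {V : Type*} [Fintype V] [DecidableEq V]

lemma gRec_submod (w : V → V → ℝ) (hw0 : ∀ i j : V, 0 ≤ w i j)
    (hw1 : ∀ j : V, ∑ i ∈ Finset.univ.erase j, w i j ≤ 1)
    {A B : Finset V} (hAB : A ⊆ B) {v : V} (hv : v ∉ B) :
    ∀ (n : ℕ) (U : Finset V) (j : V),
      gRec w n U (insert v B) j - gRec w n U B j ≤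
        gRec w n U (insert v A) j - gRec w n U A j := by
  have hmono := fun {D D' : Finset V} (h : D ⊆ D') => gRec_mono w hw0 hw1 h
  intro n
  induction n with
  | zero =>
    intro U j
    by_cases hU : j ∈ U
    · simp [gRec_zero_of_mem w hU]
    · by_cases hjv : j = v
      · subst hjv
        rw [gRec_one_of_mem w (Finset.mem_insert_self j B) hU,
          gRec_one_of_mem w (Finset.mem_insert_self j A) hU]
        have := hmono hAB 0 U j
        linarith
      · by_cases hA : j ∈ A
        · have hB := hAB hA
          rw [gRec_one_of_mem w (Finset.mem_insert_of_mem hB) hU,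
            gRec_one_of_mem w hB hU,
            gRec_one_of_mem w (Finset.mem_insert_of_mem hA) hU,
            gRec_one_of_mem w hA hU]
        · by_cases hB : j ∈ B
          · rw [gRec_one_of_mem w (Finset.mem_insert_of_mem hB) hU,
              gRec_one_of_mem w hB hU, sub_self, sub_nonneg]
            exact hmono (Finset.subset_insert v A) 0 U j
          · have h1 : j ∉ insert v B := by simp [hjv, hB]
            have h2 : j ∉ insert v A := by simp [hjv, hA]
            simp [gRec, hB, hA, h1, h2]
  | succ n ih =>
    intro U j
    by_cases hU : j ∈ U
    · simp [gRec_zero_of_mem w hU]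
    · by_cases hjv : j = v
      · subst hjv
        rw [gRec_one_of_mem w (Finset.mem_insert_self j B) hU,
          gRec_one_of_mem w (Finset.mem_insert_self j A) hU]
        have := hmono hAB (n + 1) U j
        linarith
      · by_cases hA : j ∈ A
        · have hB := hAB hA
          rw [gRec_one_of_mem w (Finset.mem_insert_of_mem hB) hU,
            gRec_one_of_mem w hB hU,
            gRec_one_of_mem w (Finset.mem_insert_of_mem hA) hU,
            gRec_one_of_mem w hA hU]
        · by_cases hB : j ∈ B
          · rw [gRec_one_of_mem w (Finset.mem_insert_of_mem hB) hU,
              gRec_one_of_mem w hB hU, sub_self, sub_nonneg]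
            exact hmono (Finset.subset_insert v A) (n + 1) U j
          · have h1 : j ∉ insert v B := by simp [hjv, hB]
            have h2 : j ∉ insert v A := by simp [hjv, hA]
            have hunf : ∀ D : Finset V, j ∉ D → gRec w (n + 1) U D j =
                ∑ i : V, w i j * gRec w n (insert j U) D i := by
              intro D hD
              show (if j ∈ U then (0:ℝ) else if j ∈ D then 1
                  else ∑ i : V, w i j * gRec w n (insert j U) D i) = _
              rw [if_neg hU, if_neg hD]
            rw [hunf _ h1, hunf _ hB, hunf _ h2, hunf _ hA,
              ← Finset.sum_sub_distrib, ← Finset.sum_sub_distrib]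
            refine Finset.sum_le_sum fun i _ => ?_
            rw [← mul_sub, ← mul_sub]
            exact mul_le_mul_of_nonneg_left (ih _ _) (hw0 i j)

lemma cPath_eq_gRec (w : V → V → ℝ) (D : Finset V) (j : V) :
    cPath w Finset.univ D j = gRec w (Fintype.card V) ∅ D j := by
  classical
  rw [gRec_eq_pSum]
  unfold cPath
  rw [tsum_eq_sum (s := Finset.range (Fintype.card V + 1))
    (f := fun k => ∑ x : Fin (k + 1) → V,
      if x 0 = j ∧ Function.Injective x ∧
          (∀ m : Fin (k + 1), (m : ℕ) < k → x m ∈ Finset.univ \ D) ∧ x (Fin.last k) ∈ D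
      then ∏ i : Fin k, w (x i.succ) (x i.castSucc) else 0)]
  · refine Finset.sum_congr rfl fun k _ => ?_
    unfold pSum
    refine Finset.sum_congr rfl fun x _ => ?_
    refine if_congr ?_ rfl rfl
    simp [Finset.mem_sdiff]
  · intro k hk
    apply Finset.sum_eq_zero
    intro x _
    rw [if_neg]
    rintro ⟨-, hinj, -, -⟩
    have hcard := Fintype.card_le_of_injective x hinj
    rw [Fintype.card_fin] at hcard
    rw [Finset.mem_range, not_lt] at hk
    omega

end Aux3

theorem stmt12 {V : Type*} [Fintype V] [DecidableEq V] (w : V → V → ℝ)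
    (hw0 : ∀ i j : V, 0 ≤ w i j)
    (hw1 : ∀ j : V, ∑ i ∈ Finset.univ.erase j, w i j ≤ 1)
    (A B : Finset V) (hAB : A ⊆ B) (v : V) (hv : v ∉ B) :
    sigmaInfl w Finset.univ (insert v B) - sigmaInfl w Finset.univ B
      ≤ sigmaInfl w Finset.univ (insert v A) - sigmaInfl w Finset.univ A := by
  classical
  unfold sigmaInfl
  simp only [cPath_eq_gRec]
  rw [← Finset.sum_sub_distrib, ← Finset.sum_sub_distrib]
  exact Finset.sum_le_sum fun j _ =>
    gRec_submod w hw0 hw1 hAB hv (Fintype.card V) ∅ j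
end

section
/- In the UISLT model, let A₀ ⊆ V with |A₀| = K, enumerate V \ A₀ = {j_1, …, j_k} with k = n − K, and set α_{A₀} := ∑_{i ∈ A₀} α_i and, for 0 ≤ m ≤ k−1, h^m := ∑_{T ⊆ {1,…,k}, |T| = m+1} (∏_{l ∈ T} β_{j_l}) · f^m((α_{j_l})_{l ∈ T}). Then the expected influence of A₀ satisfies σ^(V, A₀) = |A₀| + α_{A₀} ∑_{m=0}^{k-1} h^m. -/
open Finset

section
variable {V : Type*} [Fintype V] [DecidableEq V] (w : V → V → ℝ) (W D : Finset V)

lemma cPath_mem (j : V) (hj : j ∈ D) : cPath w W D j = 1 := by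
  classical
  rw [cPath]
  rw [tsum_eq_single 0]
  · rw [Finset.sum_eq_single (fun _ : Fin 1 => j)]
    · rw [if_pos]
      · simp
      · refine ⟨rfl, fun a b _ => by have ha := a.isLt; have hb := b.isLt; exact Fin.ext (by omega), fun m hm => by omega, hj⟩
    · intro x _ hx
      rw [if_neg]
      rintro ⟨h0, -, -, -⟩
      exact hx (funext fun i => by rw [Subsingleton.elim i 0]; exact h0)
    · simp
  · intro k hk
    apply Finset.sum_eq_zero
    intro x _
    rw [if_neg]
    rintro ⟨h0, -, hmid, -⟩
    have := hmid 0 (by simpa using Nat.pos_of_ne_zero hk)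
    rw [h0] at this
    exact (Finset.mem_sdiff.mp this).2 hj
end


lemma count_image_eq {k m : ℕ} (S : Finset (Fin k)) (hS : S.card = m) :
    ((univ : Finset (Fin m → Fin k)).filter (fun w => Finset.image w univ = S)).card
      = Nat.factorial m := by
  classical
  rw [← Fintype.card_subtype]
  have hcards : Fintype.card (Fin m) = Fintype.card S := by simp [hS]
  have e0 : Fin m ≃ S := Fintype.equivOfCardEq hcards
  have himg : ∀ σ : Fin m ≃ S, Finset.image (fun i => ((σ i : S) : Fin k)) univ = S := by
    intro σ
    ext t
    simp only [Finset.mem_image, Finset.mem_univ, true_and]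
    constructor
    · rintro ⟨i, rfl⟩; exact (σ i).2
    · intro ht
      exact ⟨σ.symm ⟨t, ht⟩, by simp⟩
  let Φ : (Fin m ≃ S) → {w : Fin m → Fin k // Finset.image w univ = S} :=
    fun σ => ⟨fun i => ((σ i : S) : Fin k), himg σ⟩
  have hΦ : Function.Bijective Φ := by
    constructor
    · intro σ σ' h
      have h2 : ∀ i, ((σ i : S) : Fin k) = ((σ' i : S) : Fin k) :=
        fun i => congrFun (congrArg Subtype.val h) i
      ext i : 1
      exact Subtype.ext (h2 i)
    · rintro ⟨w, hw⟩
      have hinj : Function.Injective w := by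
        have hcard : (Finset.image w univ).card = (univ : Finset (Fin m)).card := by
          rw [hw]; simp [hS]
        have h2 := Finset.card_image_iff.mp hcard
        exact fun a b hab => h2 (by simp) (by simp) hab
      have hmem : ∀ i, w i ∈ S := fun i => by
        rw [← hw]; exact Finset.mem_image_of_mem _ (Finset.mem_univ i)
      have hbij : Function.Bijective (fun i => (⟨w i, hmem i⟩ : S)) := by
        rw [Fintype.bijective_iff_injective_and_card]
        exact ⟨fun a b hab => hinj (congrArg Subtype.val hab), hcards⟩
      exact ⟨Equiv.ofBijective _ hbij, Subtype.ext (funext fun i => rfl)⟩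
  rw [← Fintype.card_of_bijective hΦ, Fintype.card_equiv e0]
  simp

lemma sum_powersetCard_erase {ι : Type*} [DecidableEq ι] (m : ℕ) (T : Finset ι)
    (hT : T.card = m + 1) (f : Finset ι → ℝ) :
    ∑ S ∈ T.powersetCard m, f S = ∑ e ∈ T, f (T.erase e) := by
  classical
  have himg : T.image (fun e => T.erase e) = T.powersetCard m := by
    apply Finset.Subset.antisymm
    · intro S hS
      simp only [Finset.mem_image] at hS
      obtain ⟨e, he, rfl⟩ := hS
      rw [Finset.mem_powersetCard]
      exact ⟨Finset.erase_subset _ _, by rw [Finset.card_erase_of_mem he, hT]; omega⟩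
    · intro S hS
      rw [Finset.mem_powersetCard] at hS
      obtain ⟨hsub, hcard⟩ := hS
      have h1 : (T \ S).card = 1 := by
        rw [Finset.card_sdiff_of_subset hsub, hT, hcard]; omega
      obtain ⟨e, he⟩ := Finset.card_eq_one.mp h1
      have heT : e ∈ T := (Finset.mem_sdiff.mp (he ▸ Finset.mem_singleton_self e)).1
      refine Finset.mem_image.mpr ⟨e, heT, ?_⟩
      apply Finset.Subset.antisymm
      · intro t ht
        obtain ⟨htne, htT⟩ := Finset.mem_erase.mp ht
        by_contra hts
        have h2 : t ∈ T \ S := Finset.mem_sdiff.mpr ⟨htT, hts⟩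
        rw [he, Finset.mem_singleton] at h2
        exact htne h2
      · intro t ht
        refine Finset.mem_erase.mpr ⟨?_, hsub ht⟩
        rintro rfl
        exact (Finset.mem_sdiff.mp (he ▸ Finset.mem_singleton_self t)).2 ht
  rw [← himg, Finset.sum_image]
  intro e he e' he' h
  by_contra hne
  have h3 : e ∈ T.erase e' := Finset.mem_erase.mpr ⟨hne, he⟩
  have h' : T.erase e = T.erase e' := h
  rw [← h'] at h3
  exact (Finset.mem_erase.mp h3).1 rfl


lemma inj_of_image {k m : ℕ} {S : Finset (Fin k)} (hS : S.card = m)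
    {w : Fin m → Fin k} (hw : Finset.image w univ = S) : Function.Injective w := by
  have hcard : (Finset.image w univ).card = (univ : Finset (Fin m)).card := by
    rw [hw]; simp [hS]
  have h2 := Finset.card_image_iff.mp hcard
  exact fun a b hab => h2 (by simp) (by simp) hab

lemma image_fin_succ {γ : Type*} [DecidableEq γ] {m : ℕ} (z : Fin (m+1) → γ) :
    Finset.image z univ = insert (z 0) (Finset.image (fun i : Fin m => z i.succ) univ) := by
  ext t
  simp only [Finset.mem_image, Finset.mem_univ, true_and, Finset.mem_insert]
  constructor
  · rintro ⟨i, rfl⟩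
    induction i using Fin.cases with
    | zero => exact Or.inl rfl
    | succ i => exact Or.inr ⟨i, rfl⟩
  · rintro (rfl | ⟨i, rfl⟩)
    exacts [⟨0, rfl⟩, ⟨i.succ, rfl⟩]

lemma succ_image {k m : ℕ} {T : Finset (Fin k)} (hT : T.card = m + 1) {e : Fin k}
    {z : Fin (m+1) → Fin k} (hinj : Function.Injective z)
    (himg : Finset.image z univ = T) (hz0 : z 0 = e) :
    Finset.image (fun i : Fin m => z i.succ) univ = T.erase e := by
  apply Finset.eq_of_subset_of_card_le
  · intro t ht
    simp only [Finset.mem_image, Finset.mem_univ, true_and] at ht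
    obtain ⟨i, rfl⟩ := ht
    refine Finset.mem_erase.mpr ⟨?_, by rw [← himg]; exact Finset.mem_image_of_mem _ (by simp)⟩
    rw [← hz0]
    exact fun h => (Fin.succ_ne_zero i) (hinj h)
  · have hin : Function.Injective (fun i : Fin m => z i.succ) :=
      fun a b h => Fin.succ_injective m (hinj h)
    rw [Finset.card_image_of_injective _ hin,
      Finset.card_erase_of_mem (by rw [← himg, ← hz0]; exact Finset.mem_image_of_mem _ (by simp)),
      hT]
    simp

lemma fiber_card {k m : ℕ} (T : Finset (Fin k)) (hT : T.card = m + 1) (e : Fin k) (he : e ∈ T) :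
    ((univ : Finset (Fin (m+1) → Fin k)).filter
      (fun z => Function.Injective z ∧ Finset.image z univ = T ∧ z 0 = e)).card
    = Nat.factorial m := by
  classical
  rw [← count_image_eq (T.erase e) (by rw [Finset.card_erase_of_mem he, hT]; omega)]
  apply Finset.card_bij' (fun z _ => fun i : Fin m => z i.succ) (fun w _ => Fin.cases e w)
  · intro z hz
    simp only [Finset.mem_filter, Finset.mem_univ, true_and] at hz
    funext a
    induction a using Fin.cases with
    | zero => simp [hz.2.2]
    | succ a => simp
  · intro w hw
    funext i
    simp
  · intro z hz
    simp only [Finset.mem_filter, Finset.mem_univ, true_and] at hz ⊢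
    exact succ_image hT hz.1 hz.2.1 hz.2.2
  · intro w hw
    simp only [Finset.mem_filter, Finset.mem_univ, true_and] at hw ⊢
    have hwinj : Function.Injective w :=
      inj_of_image (by rw [Finset.card_erase_of_mem he, hT]; omega) hw
    have hmem : ∀ i, w i ∈ T.erase e := fun i => by
      rw [← hw]; exact Finset.mem_image_of_mem _ (by simp)
    refine ⟨?_, ?_, by simp⟩
    · intro a b hab
      induction a using Fin.cases with
      | zero =>
        induction b using Fin.cases with
        | zero => rfl
        | succ b =>
          simp only [Fin.cases_zero, Fin.cases_succ] at hab
          exact absurd hab.symm (Finset.mem_erase.mp (hmem b)).1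
      | succ a =>
        induction b using Fin.cases with
        | zero =>
          simp only [Fin.cases_zero, Fin.cases_succ] at hab
          exact absurd hab (Finset.mem_erase.mp (hmem a)).1
        | succ b =>
          simp only [Fin.cases_succ] at hab
          rw [hwinj hab]
    · rw [image_fin_succ]
      simp only [Fin.cases_zero, Fin.cases_succ]
      rw [show Finset.image (fun i => w i) univ = T.erase e from hw]
      exact Finset.insert_erase he

open Finset in
lemma inj_sum_eq {k : ℕ} (m : ℕ) (B C : Fin k → ℝ) :
    ∑ z ∈ (univ : Finset (Fin (m+1) → Fin k)).filter Function.Injective,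
        B (z 0) * ∏ i : Fin m, C (z i.succ)
    = ∑ T ∈ (univ : Finset (Fin k)).powersetCard (m+1), ∑ e ∈ T,
        (Nat.factorial m : ℝ) * (B e * ∏ t ∈ T.erase e, C t) := by
  classical
  rw [← Finset.sum_fiberwise_of_maps_to
    (g := fun z : Fin (m+1) → Fin k => Finset.image z univ)
    (t := (univ : Finset (Fin k)).powersetCard (m+1))
    (fun z hz => by
      rw [Finset.mem_powersetCard_univ]
      show (Finset.image z univ).card = m + 1
      rw [Finset.card_image_of_injective _ (Finset.mem_filter.mp hz).2, Finset.card_univ,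
        Fintype.card_fin])]
  refine Finset.sum_congr rfl fun T hT => ?_
  rw [Finset.mem_powersetCard_univ] at hT
  rw [← Finset.sum_fiberwise_of_maps_to
    (g := fun z : Fin (m+1) → Fin k => z 0)
    (t := T)
    (fun z hz => by
      rw [Finset.mem_filter] at hz
      show z 0 ∈ T
      rw [← hz.2]
      exact Finset.mem_image_of_mem _ (Finset.mem_univ 0))]
  refine Finset.sum_congr rfl fun e he => ?_
  have hconst : ∀ z ∈ ((univ : Finset (Fin (m+1) → Fin k)).filter
      Function.Injective).filter
        (fun z => Finset.image z univ = T) |>.filter (fun z => z 0 = e),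
      B (z 0) * ∏ i : Fin m, C (z i.succ) = B e * ∏ t ∈ T.erase e, C t := by
    intro z hz
    simp only [Finset.mem_filter, Finset.mem_univ, true_and] at hz
    obtain ⟨⟨hinj, himg⟩, hz0⟩ := hz
    rw [hz0, ← succ_image hT hinj himg hz0, Finset.prod_image]
    intro a _ b _ hab
    exact Fin.succ_injective m (hinj hab)
  rw [Finset.sum_congr rfl hconst, Finset.sum_const, nsmul_eq_mul]
  congr 1
  rw [Finset.filter_filter, Finset.filter_filter]
  rw [← fiber_card T hT e he]

open Finset in
lemma main_m {n k : ℕ} (α β : Fin n → ℝ) (A₀ : Finset (Fin n))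
    (jf : Fin k → Fin n) (hjf : Function.Injective jf)
    (hjfim : Finset.image jf univ = univ \ A₀) (m : ℕ) (hm : m < k) :
    ∑ x ∈ (univ : Finset (Fin (m+2) → Fin n)).filter (fun x =>
        Function.Injective x ∧ (∀ l : Fin (m+2), (l:ℕ) < m+1 → x l ∈ univ \ A₀)
          ∧ x (Fin.last (m+1)) ∈ A₀),
      ∏ i : Fin (m+1), α (x i.succ) * β (x i.castSucc)
    = (∑ a ∈ A₀, α a) * ∑ T ∈ (univ : Finset (Fin k)).powersetCard (m+1),
        (∏ l ∈ T, β (jf l)) * fPoly m T (fun l => α (jf l)) := by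
  classical
  have hk0 : 0 < k := lt_of_le_of_lt (Nat.zero_le m) hm
  have : Nonempty (Fin k) := ⟨⟨0, hk0⟩⟩
  set invj := Function.invFun jf with hinvj
  have hleft : ∀ l, invj (jf l) = l := Function.leftInverse_invFun hjf
  have hrng : ∀ t : Fin n, t ∈ univ \ A₀ → jf (invj t) = t := by
    intro t ht
    apply Function.invFun_eq
    rw [← hjfim] at ht
    obtain ⟨l, -, rfl⟩ := Finset.mem_image.mp ht
    exact ⟨l, rfl⟩
  have step1 : ∑ x ∈ (univ : Finset (Fin (m+2) → Fin n)).filter (fun x =>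
        Function.Injective x ∧ (∀ l : Fin (m+2), (l:ℕ) < m+1 → x l ∈ univ \ A₀)
          ∧ x (Fin.last (m+1)) ∈ A₀),
      ∏ i : Fin (m+1), α (x i.succ) * β (x i.castSucc)
      = ∑ p ∈ A₀ ×ˢ ((univ : Finset (Fin (m+1) → Fin k)).filter Function.Injective),
          α p.1 * (β (jf (p.2 0)) *
            ∏ i : Fin m, (α (jf (p.2 i.succ)) * β (jf (p.2 i.succ)))) := by
    apply Finset.sum_bij'
      (i := fun x _ => (x (Fin.last (m+1)), fun l : Fin (m+1) => invj (x l.castSucc)))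
      (j := fun p _ => Fin.snoc (fun l => jf (p.2 l)) p.1)
    -- left_inv
    · intro x hx
      simp only [Finset.mem_filter, Finset.mem_univ, true_and] at hx
      obtain ⟨hinj, hmid, hlast⟩ := hx
      have hb : ∀ l : Fin (m+1), jf (invj (x l.castSucc)) = x l.castSucc := by
        intro l
        exact hrng _ (hmid l.castSucc (by simp [Fin.coe_castSucc, l.isLt]))
      funext u
      induction u using Fin.lastCases with
      | last => simp [Fin.snoc_last]
      | cast l => simp [Fin.snoc_castSucc, hb]
    -- right_inv
    · intro p hp
      ext
      · simp [Fin.snoc_last]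
      · simp [Fin.snoc_castSucc, hleft]
    -- h (weights)
    · intro x hx
      simp only [Finset.mem_filter, Finset.mem_univ, true_and] at hx
      obtain ⟨hinj, hmid, hlast⟩ := hx
      have hb : ∀ l : Fin (m+1), jf (invj (x l.castSucc)) = x l.castSucc := by
        intro l
        exact hrng _ (hmid l.castSucc (by simp [Fin.coe_castSucc, l.isLt]))
      simp only [hb]
      rw [Finset.prod_mul_distrib,
        Fin.prod_univ_castSucc (f := fun i : Fin (m+1) => α (x i.succ)),
        Fin.prod_univ_succ (f := fun i : Fin (m+1) => β (x i.castSucc)),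
        Finset.prod_mul_distrib]
      simp only [Fin.succ_castSucc, Fin.succ_last, Fin.castSucc_zero]
      ring
    -- hi
    · intro x hx
      simp only [Finset.mem_filter, Finset.mem_univ, true_and] at hx
      obtain ⟨hinj, hmid, hlast⟩ := hx
      have hb : ∀ l : Fin (m+1), jf (invj (x l.castSucc)) = x l.castSucc := by
        intro l
        exact hrng _ (hmid l.castSucc (by simp [Fin.coe_castSucc, l.isLt]))
      rw [Finset.mem_product]
      refine ⟨hlast, ?_⟩
      simp only [Finset.mem_filter, Finset.mem_univ, true_and]
      intro a b hab
      have : x a.castSucc = x b.castSucc := by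
        rw [← hb a, ← hb b]
        exact congrArg jf hab
      exact Fin.castSucc_injective _ (hinj this)
    -- hj
    · intro p hp
      rw [Finset.mem_product] at hp
      obtain ⟨ha, hz⟩ := hp
      simp only [Finset.mem_filter, Finset.mem_univ, true_and] at hz ⊢
      have hzmem : ∀ l : Fin (m+1), jf (p.2 l) ∈ univ \ A₀ := by
        intro l
        rw [← hjfim]
        exact Finset.mem_image_of_mem _ (Finset.mem_univ _)
      refine ⟨?_, ?_, ?_⟩
      · intro u v huv
        induction u using Fin.lastCases with
        | last =>
          induction v using Fin.lastCases with
          | last => rfl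
          | cast l =>
            rw [Fin.snoc_last, Fin.snoc_castSucc] at huv
            exact absurd ha (by rw [huv]; exact (Finset.mem_sdiff.mp (hzmem l)).2)
        | cast l =>
          induction v using Fin.lastCases with
          | last =>
            rw [Fin.snoc_last, Fin.snoc_castSucc] at huv
            exact absurd ha (by rw [← huv]; exact (Finset.mem_sdiff.mp (hzmem l)).2)
          | cast l' =>
            rw [Fin.snoc_castSucc, Fin.snoc_castSucc] at huv
            rw [hz (hjf huv)]
      · intro l hl
        have hcast : l = Fin.castSucc ⟨(l : ℕ), hl⟩ := by
          apply Fin.ext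
          simp
        rw [hcast, Fin.snoc_castSucc]
        exact hzmem _
      · rw [Fin.snoc_last]
        exact ha
  rw [step1, Finset.sum_product]
  have step2 : ∀ a ∈ A₀, ∑ z ∈ ((univ : Finset (Fin (m+1) → Fin k)).filter
      Function.Injective), α a * (β (jf (z 0)) *
        ∏ i : Fin m, (α (jf (z i.succ)) * β (jf (z i.succ))))
      = α a * ∑ z ∈ ((univ : Finset (Fin (m+1) → Fin k)).filter Function.Injective),
          β (jf (z 0)) * ∏ i : Fin m, (α (jf (z i.succ)) * β (jf (z i.succ))) := by
    intro a _
    rw [Finset.mul_sum]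
  rw [Finset.sum_congr rfl step2, ← Finset.sum_mul]
  congr 1
  rw [inj_sum_eq m (fun t => β (jf t)) (fun t => α (jf t) * β (jf t))]
  refine Finset.sum_congr rfl fun T hT => ?_
  rw [Finset.mem_powersetCard_univ] at hT
  rw [fPoly, sum_powersetCard_erase m T hT, Finset.mul_sum, Finset.mul_sum]
  refine Finset.sum_congr rfl fun e he => ?_
  rw [Finset.prod_mul_distrib, ← Finset.mul_prod_erase _ _ he]
  ring

theorem stmt13 (n K k : ℕ) (α β : Fin n → ℝ)
    (hα : ∀ i, 0 ≤ α i) (hβ : ∀ i, 0 ≤ β i)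
    (hsum : ∀ j : Fin n, β j * ∑ i ∈ Finset.univ.erase j, α i ≤ 1)
    (A₀ : Finset (Fin n)) (hK : A₀.card = K) (hk : k = n - K)
    (jf : Fin k → Fin n) (hjf : Function.Injective jf)
    (hjfim : Finset.image jf Finset.univ = Finset.univ \ A₀) :
    sigmaInfl (fun i j => α i * β j) Finset.univ A₀
      = (K : ℝ) + (∑ i ∈ A₀, α i) *
          ∑ m ∈ Finset.range k,
            ∑ T ∈ (Finset.univ : Finset (Fin k)).powersetCard (m + 1),
              (∏ l ∈ T, β (jf l)) * fPoly m T (fun l => α (jf l)) := by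
  classical
  have hcardVA : (univ \ A₀ : Finset (Fin n)).card = k := by
    rw [← hjfim, Finset.card_image_of_injective _ hjf, Finset.card_univ, Fintype.card_fin]
  rw [sigmaInfl, ← Finset.sum_sdiff (Finset.subset_univ A₀)]
  have hA : ∑ j ∈ A₀, cPath (fun i j => α i * β j) univ A₀ j = (K:ℝ) := by
    rw [Finset.sum_congr rfl (fun j hj => cPath_mem _ _ _ j hj), Finset.sum_const, hK]
    simp
  rw [hA, add_comm]
  congr 1
  have hpath : ∀ j ∈ univ \ A₀, cPath (fun i j => α i * β j) univ A₀ j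
      = ∑ k' ∈ Finset.range (k+1), ∑ x : Fin (k' + 1) → Fin n,
          (if x 0 = j ∧ Function.Injective x ∧
              (∀ m : Fin (k' + 1), (m : ℕ) < k' → x m ∈ univ \ A₀) ∧ x (Fin.last k') ∈ A₀
           then ∏ i : Fin k', α (x i.succ) * β (x i.castSucc) else 0) := by
    intro j hj
    rw [cPath]
    apply tsum_eq_sum
    intro k' hk'
    rw [Finset.mem_range, not_lt] at hk'
    apply Finset.sum_eq_zero
    intro x _
    rw [if_neg]
    rintro ⟨-, hinj, hmid, -⟩
    have hsub : Finset.image x ((univ : Finset (Fin k')).map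
        ⟨Fin.castSucc, Fin.castSucc_injective k'⟩) ⊆ univ \ A₀ := by
      intro t ht
      simp only [Finset.mem_image, Finset.mem_map, Finset.mem_univ, true_and,
        Function.Embedding.coeFn_mk] at ht
      obtain ⟨u, ⟨l, rfl⟩, rfl⟩ := ht
      exact hmid l.castSucc (by simp [l.isLt])
    have hcle := Finset.card_le_card hsub
    rw [Finset.card_image_of_injective _ hinj, hcardVA, Finset.card_map, Finset.card_univ,
      Fintype.card_fin] at hcle
    omega
  rw [Finset.sum_congr rfl hpath, Finset.sum_comm, Finset.sum_range_succ' _ k]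
  have hzero : ∑ j ∈ univ \ A₀, ∑ x : Fin (0 + 1) → Fin n,
      (if x 0 = j ∧ Function.Injective x ∧
          (∀ m : Fin (0 + 1), (m : ℕ) < 0 → x m ∈ univ \ A₀) ∧ x (Fin.last 0) ∈ A₀
       then ∏ i : Fin 0, α (x i.succ) * β (x i.castSucc) else 0) = 0 := by
    apply Finset.sum_eq_zero
    intro j hj
    apply Finset.sum_eq_zero
    intro x _
    rw [if_neg]
    rintro ⟨h0, -, -, hlast⟩
    have : x 0 ∈ A₀ := hlast
    rw [h0] at this
    exact (Finset.mem_sdiff.mp hj).2 this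
  rw [hzero, add_zero, Finset.mul_sum]
  refine Finset.sum_congr rfl fun m hm => ?_
  rw [Finset.mem_range] at hm
  rw [← main_m α β A₀ jf hjf hjfim m hm, Finset.sum_comm, Finset.sum_filter]
  refine Finset.sum_congr rfl fun x _ => ?_
  by_cases hC : Function.Injective x ∧ (∀ l : Fin (m+2), (l:ℕ) < m+1 → x l ∈ univ \ A₀)
      ∧ x (Fin.last (m+1)) ∈ A₀
  · have hx0 : x 0 ∈ univ \ A₀ := hC.2.1 0 (by simp)
    rw [if_pos hC]
    have hstep : ∀ j ∈ univ \ A₀, (if x 0 = j ∧ Function.Injective x ∧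
        (∀ l : Fin (m+1+1), (l:ℕ) < m+1 → x l ∈ univ \ A₀) ∧ x (Fin.last (m+1)) ∈ A₀
        then ∏ i : Fin (m+1), α (x i.succ) * β (x i.castSucc) else 0)
        = (if x 0 = j then ∏ i : Fin (m+1), α (x i.succ) * β (x i.castSucc) else 0) :=
      fun j _ => if_congr (and_iff_left hC) rfl rfl
    rw [Finset.sum_congr rfl hstep, Finset.sum_ite_eq, if_pos hx0]
  · have : ∀ j, ¬ (x 0 = j ∧ Function.Injective x ∧
        (∀ l : Fin (m+1+1), (l:ℕ) < m+1 → x l ∈ univ \ A₀) ∧ x (Fin.last (m+1)) ∈ A₀) := by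
      intro j h
      exact hC ⟨h.2.1, h.2.2.1, h.2.2.2⟩
    rw [if_neg hC]
    apply Finset.sum_eq_zero
    intro j _
    rw [if_neg (this j)]
end
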